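/- arXiv:math/0208193 — 8 statements merged into one kernel-verified Lean document; each statement's English description precedes it below -/
import Mathlib

section
/- Let X be a (real or complex) Banach space, let c > 1 be a real number, and let (x_n)_{n≥1} be a sequence in X such that ‖x_n‖ ≥ c^n for all n ≥ 1. Then 0 does not belong to the closure of the set {x_n : n ≥ 1} in the weak topology of X. -/
section aux

variable {𝕜 : Type*} [RCLike 𝕜] {X : Type*} [NormedAddCommGroup X] [NormedSpace 𝕜 X]

noncomputable def pickSgn (z w : 𝕜) : 𝕜 := if ‖w‖ ≤ ‖z + w‖ then 1 else -1

lemma pickSgn_norm (z w : 𝕜) : ‖pickSgn z w‖ = 1 := by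
  unfold pickSgn; split_ifs <;> simp

lemma pickSgn_spec (z w : 𝕜) : ‖w‖ ≤ ‖z + pickSgn z w * w‖ := by
  unfold pickSgn
  split_ifs with h
  · simpa using h
  · push_neg at h
    have h2 : ‖(z + w) - (z + -1 * w)‖ = 2 * ‖w‖ := by
      have e : (z + w) - (z + -1 * w) = 2 * w := by ring
      rw [e, norm_mul]
      norm_num
    have h3 := norm_sub_le (z + w) (z + -1 * w)
    linarith

noncomputable def SS (a : ℕ → ℝ) (g : ℕ → X →L[𝕜] 𝕜) (x : ℕ → X) : ℕ → (X →L[𝕜] 𝕜)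
  | 0 => 0
  | n+1 => SS a g x n +
      (g (n+1)).smulRight
        (pickSgn (SS a g x n (x (n+1))) ((a (n+1) : 𝕜) * g (n+1) (x (n+1))) * (a (n+1) : 𝕜))

variable (a : ℕ → ℝ) (g : ℕ → X →L[𝕜] 𝕜) (x : ℕ → X)

lemma SS_succ (n : ℕ) : SS a g x (n+1) = SS a g x n +
    (g (n+1)).smulRight
      (pickSgn (SS a g x n (x (n+1))) ((a (n+1) : 𝕜) * g (n+1) (x (n+1))) * (a (n+1) : 𝕜)) :=
  rfl

lemma SS_diff_norm (n : ℕ) :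
    ‖SS a g x (n+1) - SS a g x n‖ ≤ ‖g (n+1)‖ * |a (n+1)| := by
  rw [SS_succ, add_sub_cancel_left, ContinuousLinearMap.norm_smulRight_apply, norm_mul,
    pickSgn_norm, one_mul, RCLike.norm_ofReal]

lemma SS_lower (n : ℕ) :
    |a (n+1)| * ‖g (n+1) (x (n+1))‖ ≤ ‖SS a g x (n+1) (x (n+1))‖ := by
  have h := pickSgn_spec (SS a g x n (x (n+1))) ((a (n+1):𝕜) * g (n+1) (x (n+1)))
  rw [norm_mul, RCLike.norm_ofReal] at h
  refine h.trans (le_of_eq ?_)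
  rw [SS_succ]
  simp only [ContinuousLinearMap.add_apply, ContinuousLinearMap.smulRight_apply, smul_eq_mul]
  ring_nf

end aux

set_option maxHeartbeats 1000000 in
lemma key_half {𝕜 : Type*} [RCLike 𝕜] {X : Type*} [NormedAddCommGroup X] [NormedSpace 𝕜 X]
    {c : ℝ} (hc : 1 < c) (x : ℕ → X) (hx : ∀ n : ℕ, 1 ≤ n → c ^ n ≤ ‖x n‖) :
    ∃ m : ℕ, 0 < m ∧ ∃ F : ℕ → (X →L[𝕜] 𝕜),
      ∀ n : ℕ, 1 ≤ n → (1:ℝ)/2 ≤ ‖F (n % m) (x n)‖ := by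
  have hc0 : (0:ℝ) < c := lt_trans one_pos hc
  set r : ℝ := c⁻¹ with hrdef
  have hr0 : 0 < r := inv_pos.2 hc0
  have hr1 : r < 1 := inv_lt_one_of_one_lt₀ hc
  have hrc : r * c = 1 := inv_mul_cancel₀ (ne_of_gt hc0)
  obtain ⟨m₀, hm₀⟩ := exists_pow_lt_of_lt_one (show (0:ℝ) < (1-r)/2 by linarith) hr1
  set m : ℕ := m₀ + 1 with hmdef
  have hm : r ^ m < (1-r)/2 :=
    lt_of_le_of_lt (pow_le_pow_of_le_one hr0.le hr1.le (Nat.le_succ m₀)) hm₀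
  have hgex : ∀ n : ℕ, ∃ gn : X →L[𝕜] 𝕜, 1 ≤ n → (‖gn‖ = 1 ∧ gn (x n) = (‖x n‖ : 𝕜)) := by
    intro n
    by_cases h : 1 ≤ n
    · have hxn : x n ≠ 0 := by
        have := lt_of_lt_of_le (pow_pos hc0 n) (hx n h)
        exact fun h0 => by simp [h0] at this
      obtain ⟨gn, hg1, hg2⟩ := exists_dual_vector 𝕜 (x n) (norm_ne_zero_iff.mpr hxn)
      exact ⟨gn, fun _ => ⟨hg1, hg2⟩⟩
    · exact ⟨0, fun h' => absurd h' h⟩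
  choose g hg using hgex
  have hgn : ∀ k : ℕ, ‖g (k+1)‖ = 1 := fun k => (hg (k+1) (Nat.succ_le_succ (Nat.zero_le k))).1
  set A : ℕ → ℕ → ℝ := fun i k => if k % m = i ∧ 1 ≤ k then r ^ k else 0 with hAdef
  have habs : ∀ i k, |A i k| ≤ r ^ k := by
    intro i k
    simp only [hAdef]
    split_ifs
    · rw [abs_of_nonneg (pow_pos hr0 k).le]
    · simp [pow_nonneg hr0.le]
  refine ⟨m, Nat.succ_pos m₀, fun i => ∑' k, (SS (A i) g x (k+1) - SS (A i) g x k), ?_⟩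
  rintro n hn
  obtain ⟨p, rfl⟩ : ∃ p, n = p + 1 := ⟨n - 1, (Nat.succ_pred_eq_of_pos hn).symm⟩
  set n : ℕ := p + 1 with hndef
  set i : ℕ := n % m with hidef
  set a : ℕ → ℝ := A i with hadef
  set t : ℕ → (X →L[𝕜] 𝕜) := fun k => SS a g x (k+1) - SS a g x k with htdef
  set S : ℕ → (X →L[𝕜] 𝕜) := SS a g x with hSdef
  have hgeo : Summable fun k : ℕ => r ^ k := summable_geometric_of_lt_one hr0.le hr1
  have htn : ∀ k, ‖t k‖ ≤ r ^ (k+1) := by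
    intro k
    calc ‖t k‖ ≤ ‖g (k+1)‖ * |a (k+1)| := SS_diff_norm a g x k
    _ = |a (k+1)| := by rw [hgn k, one_mul]
    _ ≤ r ^ (k+1) := habs i (k+1)
  have hgeo1 : Summable fun k : ℕ => r ^ (k+1) := by
    simp only [pow_succ]
    exact hgeo.mul_right r
  have hsum : Summable t := Summable.of_norm_bounded hgeo1 htn
  -- partial sums
  have hS : ∀ N, ∑ k ∈ Finset.range N, t k = S N := by
    intro N
    rw [htdef]
    rw [Finset.sum_range_sub (fun k => SS a g x k)]
    simp [hSdef, SS]
  -- decomposition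
  have hdec : S n + ∑' k, t (k + n) = ∑' k, t k := by
    rw [← hS n]
    exact Summable.sum_add_tsum_nat_add n hsum
  set R : X →L[𝕜] 𝕜 := ∑' k, t (k + n) with hRdef
  -- vanishing of the first m₀ tail terms
  have hzero : ∀ k, k < m₀ → t (k + n) = 0 := by
    intro k hk
    have hA0 : a (k + n + 1) = 0 := by
      have hne : ¬ (k + n + 1) % m = i := by
        intro hmod
        have h1 : (n + (k+1)) % m = n % m := by
          rw [show n + (k+1) = k + n + 1 by omega, hmod, hidef]
        have h2 : (k+1) ≡ 0 [MOD m] := by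
          have : n + (k+1) ≡ n + 0 [MOD m] := by
            simpa [Nat.ModEq, Nat.add_zero] using h1
          exact Nat.ModEq.add_left_cancel' n this
        have h3 : m ∣ (k+1) := (Nat.modEq_zero_iff_dvd).mp h2
        have h4 : m ≤ k+1 := Nat.le_of_dvd (Nat.succ_pos k) h3
        omega
      simp only [hadef, hAdef]
      rw [if_neg]
      tauto
    have : ‖t (k + n)‖ ≤ 0 := by
      calc ‖t (k+n)‖ ≤ ‖g (k+n+1)‖ * |a (k+n+1)| := SS_diff_norm a g x (k+n)
      _ = 0 := by rw [hA0]; simp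
    exact norm_le_zero_iff.mp this
  -- tail norm bound
  have hsumnorm : Summable fun k => ‖t (k + n)‖ := by
    exact Summable.of_nonneg_of_le (fun k => norm_nonneg _) (fun k => htn (k + n))
      ((summable_nat_add_iff n).mpr hgeo1)
  have hRnorm : ‖R‖ ≤ r ^ (n + m) * (1 - r)⁻¹ := by
    have h1 : ‖R‖ ≤ ∑' k, ‖t (k + n)‖ := norm_tsum_le_tsum_norm hsumnorm
    have h2 : ∑' k, ‖t (k + n)‖ = ∑ k ∈ Finset.range m₀, ‖t (k + n)‖
        + ∑' k, ‖t (k + m₀ + n)‖ :=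
      (Summable.sum_add_tsum_nat_add m₀ hsumnorm).symm
    have h3 : ∑ k ∈ Finset.range m₀, ‖t (k + n)‖ = 0 := by
      apply Finset.sum_eq_zero
      intro k hk
      rw [hzero k (Finset.mem_range.mp hk)]
      simp
    have h4 : ∑' k, ‖t (k + m₀ + n)‖ ≤ ∑' k : ℕ, r ^ (n + m) * r ^ k := by
      refine Summable.tsum_le_tsum (fun k => ?_) ?_ ?_
      · calc ‖t (k + m₀ + n)‖ ≤ r ^ (k + m₀ + n + 1) := htn _
        _ = r ^ (n + m) * r ^ k := by rw [← pow_add]; congr 1; omega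
      · exact (summable_nat_add_iff m₀).mpr hsumnorm
      · exact hgeo.mul_left _
    have h5 : ∑' k : ℕ, r ^ (n + m) * r ^ k = r ^ (n + m) * (1 - r)⁻¹ := by
      rw [tsum_mul_left, tsum_geometric_of_lt_one hr0.le hr1]
    linarith
  have h1r : (0:ℝ) < 1 - r := by linarith
  have hRn : ‖R‖ ≤ r ^ n * (1/2) := by
    have : r ^ m * (1 - r)⁻¹ ≤ 1/2 := by
      rw [← div_eq_mul_inv, div_le_div_iff₀ h1r (by norm_num : (0:ℝ) < 2)]
      linarith
    calc ‖R‖ ≤ r ^ (n + m) * (1 - r)⁻¹ := hRnorm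
    _ = r ^ n * (r ^ m * (1 - r)⁻¹) := by rw [pow_add]; ring
    _ ≤ r ^ n * (1/2) := by
        apply mul_le_mul_of_nonneg_left this (pow_nonneg hr0.le n)
  -- lower bound on S n (x n)
  have h_an : a n = r ^ n := by
    show (if n % m = i ∧ 1 ≤ n then r ^ n else 0) = r ^ n
    rw [if_pos ⟨hidef.symm, hn⟩]
  have hgx : ‖g n (x n)‖ = ‖x n‖ := by
    rw [(hg n hn).2, RCLike.norm_ofReal, abs_of_nonneg (norm_nonneg _)]
  have hlow : r ^ n * ‖x n‖ ≤ ‖S n (x n)‖ := by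
    have := SS_lower a g x p
    rwa [show p + 1 = n from rfl, h_an, hgx, abs_of_nonneg (pow_nonneg hr0.le n)] at this
  -- conclude
  have hsplit : (∑' k, t k) (x n) = S n (x n) + R (x n) := by
    rw [← hdec]
    simp
  have hRx : ‖R (x n)‖ ≤ ‖R‖ * ‖x n‖ := R.le_opNorm (x n)
  have htri : ‖S n (x n)‖ - ‖R (x n)‖ ≤ ‖(∑' k, t k) (x n)‖ := by
    rw [hsplit]
    have := norm_sub_le (S n (x n) + R (x n)) (R (x n))
    simp only [add_sub_cancel_right] at this
    linarith
  have hxn := hx n hn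
  have hrcn : r ^ n * c ^ n = 1 := by rw [← mul_pow, hrc, one_pow]
  have hrpos : (0:ℝ) < r ^ n := pow_pos hr0 n
  have hxnn : r ^ n * c ^ n ≤ r ^ n * ‖x n‖ :=
    mul_le_mul_of_nonneg_left hxn hrpos.le
  have hmul := mul_le_mul_of_nonneg_right hRn (norm_nonneg (x n))
  have h7 : r ^ n * (1/2) * ‖x n‖ = (1/2) * (r ^ n * ‖x n‖) := by ring
  show (1:ℝ)/2 ≤ ‖(∑' k, t k) (x n)‖
  linarith [hlow, hRx, htri, hxnn, hrcn, hmul, h7]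

/-- Let `X` be a Banach space over `𝕜 = ℝ` or `ℂ`, let `c > 1`, and let `(x_n)_{n ≥ 1}` be a
sequence in `X` with `‖x n‖ ≥ c ^ n` for all `n ≥ 1`. Then `0` is not in the weak closure of
`{x_n : n ≥ 1}`. -/
theorem stmt_0 {𝕜 : Type*} [RCLike 𝕜] {X : Type*} [NormedAddCommGroup X]
    [NormedSpace 𝕜 X] [CompleteSpace X] {c : ℝ} (hc : 1 < c) (x : ℕ → X)
    (hx : ∀ n : ℕ, 1 ≤ n → c ^ n ≤ ‖x n‖) :
    (0 : WeakSpace 𝕜 X) ∉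
      closure {y : WeakSpace 𝕜 X | ∃ n : ℕ, 1 ≤ n ∧ y = toWeakSpace 𝕜 X (x n)} := by
  intro h0
  obtain ⟨m, hm, F, hF⟩ := key_half (𝕜 := 𝕜) hc x hx
  have hcont : ∀ i : ℕ, Continuous fun y : WeakSpace 𝕜 X => F i ((toWeakSpace 𝕜 X).symm y) :=
    fun i => WeakBilin.eval_continuous _ (F i)
  set U : Set (WeakSpace 𝕜 X) :=
    ⋂ i ∈ Finset.range m, {y : WeakSpace 𝕜 X | ‖F i ((toWeakSpace 𝕜 X).symm y)‖ < 1/2} with hU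
  have hUopen : IsOpen U := by
    refine isOpen_biInter_finset fun i _ => ?_
    exact isOpen_lt (continuous_norm.comp (hcont i)) continuous_const
  have h0U : (0 : WeakSpace 𝕜 X) ∈ U := by
    refine Set.mem_iInter₂.2 fun i _ => ?_
    simp only [Set.mem_setOf_eq, map_zero, norm_zero]
    norm_num
  obtain ⟨y, hyU, hyS⟩ := mem_closure_iff.mp h0 U hUopen h0U
  obtain ⟨n, hn, rfl⟩ := hyS
  have hmem := Set.mem_iInter₂.1 hyU (n % m) (Finset.mem_range.2 (Nat.mod_lt n hm))
  simp only [Set.mem_setOf_eq, LinearEquiv.symm_apply_apply] at hmem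
  have := hF n hn
  linarith
end

section
/- Let X be a Banach space, let c > 1, and let (x_n)_{n≥1} be a sequence in X with ‖x_n‖ ≥ c^n for all n ≥ 1. Then there exist a positive integer N and continuous linear functionals F_1, …, F_N ∈ X* such that max_{1 ≤ k ≤ N} |F_k(x_n)| ≥ 1 for every n ≥ 1. -/
open Finset Filter Topology

private lemma phase_aux {𝕜 : Type*} [RCLike 𝕜] (v : 𝕜) (t : ℝ) (ht : 0 ≤ t) :
    ∃ μ : 𝕜, ‖μ‖ = t ∧ ‖v + μ‖ = ‖v‖ + t := by
  by_cases hv : v = 0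
  · exact ⟨(t : 𝕜), by simp [RCLike.norm_ofReal, abs_of_nonneg ht],
      by simp [hv, RCLike.norm_ofReal, abs_of_nonneg ht]⟩
  · have hnv : (0:ℝ) < ‖v‖ := norm_pos_iff.mpr hv
    refine ⟨((t / ‖v‖ : ℝ) : 𝕜) * v, ?_, ?_⟩
    · rw [norm_mul, RCLike.norm_ofReal, abs_of_nonneg (by positivity)]
      field_simp
    · have h1 : v + ((t / ‖v‖ : ℝ) : 𝕜) * v = ((1 + t / ‖v‖ : ℝ) : 𝕜) * v := by
        push_cast; ring
      rw [h1, norm_mul, RCLike.norm_ofReal, abs_of_nonneg (by positivity)]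
      field_simp

private lemma count_aux (M K i : ℕ) (hK : 0 < K) :
    ((Finset.range M).filter (fun n => n % K = i)).card ≤ M / K + 1 := by
  classical
  have hmap : ∀ n ∈ (Finset.range M).filter (fun n => n % K = i),
      n / K ∈ Finset.range (M / K + 1) := by
    intro n hn
    simp only [Finset.mem_filter, Finset.mem_range] at hn ⊢
    have h9 : n / K ≤ M / K := Nat.div_le_div_right hn.1.le
    omega
  have hinj : Set.InjOn (fun n => n / K)
      ↑((Finset.range M).filter (fun n => n % K = i)) := by
    intro a ha b hb hab
    simp only [Finset.coe_filter, Set.mem_setOf_eq, Finset.mem_range] at ha hb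
    simp only at hab
    have h1 : a = K * (a / K) + a % K := (Nat.div_add_mod a K).symm
    have h2 : b = K * (b / K) + b % K := (Nat.div_add_mod b K).symm
    rw [h1, h2, hab, ha.2, hb.2]
  calc ((Finset.range M).filter (fun n => n % K = i)).card
      ≤ (Finset.range (M / K + 1)).card := Finset.card_le_card_of_injOn _ hmap hinj
    _ = M / K + 1 := Finset.card_range _

private lemma auxQ {𝕜 : Type*} [RCLike 𝕜] {X : Type*} [NormedAddCommGroup X]
    [NormedSpace 𝕜 X] (x : ℕ → X) (τ : ℝ) (hτ : 0 < τ) :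
    ∀ (s : ℕ) (S : Finset ℕ), S.card = s → ∀ (P : X →L[𝕜] 𝕜) (ρ : ℝ), 0 < ρ →
      (∀ n ∈ S, ρ ≤ ‖x n‖) →
      ∃ h : X →L[𝕜] 𝕜, ‖h‖ ≤ ((2:ℝ) ^ s - 1) * τ / ρ ∧
        ∀ n ∈ S, τ ≤ ‖P (x n) + h (x n)‖ := by
  classical
  intro s
  induction s with
  | zero =>
      intro S hS P ρ hρ _
      have hSe : S = ∅ := Finset.card_eq_zero.mp hS
      refine ⟨0, by simp, ?_⟩
      simp [hSe]
  | succ s ih =>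
      intro S hS P ρ hρ hlow
      have hne : S.Nonempty := Finset.card_pos.mp (by omega)
      obtain ⟨n₀, hn₀S, hn₀min⟩ := S.exists_min_image (fun n => ‖x n‖) hne
      have hρn₀ : ρ ≤ ‖x n₀‖ := hlow n₀ hn₀S
      have hn₀pos : (0:ℝ) < ‖x n₀‖ := lt_of_lt_of_le hρ hρn₀
      have hx0 : x n₀ ≠ 0 := by
        intro h; rw [h, norm_zero] at hn₀pos; exact lt_irrefl 0 hn₀pos
      obtain ⟨g, hg1, hgx⟩ := exists_dual_vector 𝕜 (x n₀) (norm_ne_zero_iff.mpr hx0)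
      obtain ⟨μ, hμn, hμv⟩ := phase_aux (P (x n₀)) ((2:ℝ) ^ s * τ) (by positivity)
      have hxnz : ((‖x n₀‖ : ℝ) : 𝕜) ≠ 0 := by
        simp only [ne_eq, RCLike.ofReal_eq_zero]
        exact ne_of_gt hn₀pos
      set μ' : 𝕜 := μ / ((‖x n₀‖ : ℝ) : 𝕜) with hμ'
      have hcard : (S.erase n₀).card = s := by
        rw [Finset.card_erase_of_mem hn₀S, hS]; rfl
      obtain ⟨h'', hb'', hv''⟩ := ih (S.erase n₀) hcard
        (P + μ' • g) ‖x n₀‖ hn₀pos (fun n hn => hn₀min n (Finset.mem_of_mem_erase hn))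
      have hone : (1:ℝ) ≤ 2 ^ s := by
        calc (1:ℝ) = 1 ^ s := (one_pow s).symm
          _ ≤ 2 ^ s := pow_le_pow_left₀ zero_le_one (by norm_num) s
      have hone' : (1:ℝ) ≤ 2 ^ (s+1) := by
        calc (1:ℝ) = 1 ^ (s+1) := (one_pow _).symm
          _ ≤ 2 ^ (s+1) := pow_le_pow_left₀ zero_le_one (by norm_num) _
      have hμ'n : ‖μ'‖ = (2:ℝ) ^ s * τ / ‖x n₀‖ := by
        rw [hμ', norm_div, hμn, RCLike.norm_ofReal, abs_of_nonneg hn₀pos.le]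
      have happ : (μ' • g) (x n₀) = μ := by
        rw [ContinuousLinearMap.smul_apply, hgx, smul_eq_mul, hμ']
        field_simp
      refine ⟨μ' • g + h'', ?_, ?_⟩
      · calc ‖μ' • g + h''‖ ≤ ‖μ' • g‖ + ‖h''‖ := norm_add_le _ _
          _ ≤ ‖μ'‖ * ‖g‖ + ‖h''‖ := by
              have hsg : ‖μ' • g‖ ≤ ‖μ'‖ * ‖g‖ := norm_smul_le μ' g
              exact add_le_add_left hsg _
          _ ≤ (2:ℝ) ^ s * τ / ‖x n₀‖ + ((2:ℝ) ^ s - 1) * τ / ‖x n₀‖ := by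
              rw [hμ'n, hg1, mul_one]
              exact add_le_add_right hb'' _
          _ = ((2:ℝ) ^ (s+1) - 1) * τ / ‖x n₀‖ := by
              rw [← add_div]; congr 1; ring
          _ ≤ ((2:ℝ) ^ (s+1) - 1) * τ / ρ := by
              have hA : (0:ℝ) ≤ ((2:ℝ) ^ (s+1) - 1) * τ := by nlinarith
              exact div_le_div_of_nonneg_left hA hρ hρn₀
      · intro n hn
        rcases eq_or_ne n n₀ with rfl | hne'
        · have hre : P (x n) + (μ' • g + h'') (x n) = (P (x n) + μ) + h'' (x n) := by
            rw [ContinuousLinearMap.add_apply, happ, ← add_assoc]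
          rw [hre]
          have h2 : ‖h'' (x n)‖ ≤ ((2:ℝ) ^ s - 1) * τ := by
            calc ‖h'' (x n)‖ ≤ ‖h''‖ * ‖x n‖ := h''.le_opNorm _
              _ ≤ (((2:ℝ) ^ s - 1) * τ / ‖x n‖) * ‖x n‖ := by
                  apply mul_le_mul_of_nonneg_right hb'' (norm_nonneg _)
              _ = ((2:ℝ) ^ s - 1) * τ := div_mul_cancel₀ _ (ne_of_gt hn₀pos)
          have h3 : ‖P (x n) + μ‖ ≤ ‖(P (x n) + μ) + h'' (x n)‖ + ‖h'' (x n)‖ := by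
            have := norm_add_le ((P (x n) + μ) + h'' (x n)) (-(h'' (x n)))
            simpa using this
          have h4 : (0:ℝ) ≤ ‖P (x n)‖ := norm_nonneg _
          rw [hμv] at h3
          linarith
        · have hnS' : n ∈ S.erase n₀ := Finset.mem_erase.mpr ⟨hne', hn⟩
          have hv := hv'' n hnS'
          have hre : (P + μ' • g) (x n) + h'' (x n) = P (x n) + (μ' • g + h'') (x n) := by
            simp only [ContinuousLinearMap.add_apply]
            ring
          rwa [hre] at hv

set_option maxHeartbeats 2000000 in
/-- Let `X` be a Banach space over `𝕜 = ℝ` or `ℂ`, let `c > 1`, and let `(x_n)_{n ≥ 1}` be a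
sequence in `X` with `‖x n‖ ≥ c ^ n` for all `n ≥ 1`. Then there exist `N ≥ 1` and continuous
linear functionals `F 1, …, F N` such that `max_{1 ≤ k ≤ N} |F k (x n)| ≥ 1` for all `n ≥ 1`. -/
theorem stmt_1 {𝕜 : Type*} [RCLike 𝕜] {X : Type*} [NormedAddCommGroup X]
    [NormedSpace 𝕜 X] [CompleteSpace X] {c : ℝ} (hc : 1 < c) (x : ℕ → X)
    (hx : ∀ n : ℕ, 1 ≤ n → c ^ n ≤ ‖x n‖) :
    ∃ (N : ℕ) (F : Fin N → (X →L[𝕜] 𝕜)), 1 ≤ N ∧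
      ∀ n : ℕ, 1 ≤ n → ∃ k : Fin N, 1 ≤ ‖F k (x n)‖ := by
  classical
  have hc0 : (0:ℝ) < c := lt_trans one_pos hc
  obtain ⟨k₀, hk₀⟩ : ∃ k : ℕ, (2:ℝ) < c ^ k := pow_unbounded_of_one_lt 2 hc
  set Q : ℕ := k₀ + 1 with hQdef
  have hQ1 : 1 ≤ Q := by omega
  have hcQ : (2:ℝ) ≤ c ^ Q := by
    have h := pow_le_pow_right₀ hc.le (show k₀ ≤ Q by omega)
    linarith
  set N' : ℕ := 8 * Q with hN'def
  have hN'pos : 0 < N' := by omega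
  -- the exponent ladder
  let E : ℕ → ℕ := fun r => Nat.rec (8 * Q) (fun _ e => 2 * e + 8 * Q) r
  have hE0 : E 0 = 8 * Q := rfl
  have hEs : ∀ r, E (r + 1) = 2 * E r + 8 * Q := fun _ => rfl
  have hE8 : ∀ r, 8 * Q ≤ E r := by
    intro r; induction r with
    | zero => rw [hE0]
    | succ r ih => rw [hEs]; omega
  have hEr : ∀ r, r + 1 ≤ E r := by
    intro r; induction r with
    | zero => rw [hE0]; omega
    | succ r ih => rw [hEs]; omega
  -- blocks
  have hex : ∀ n : ℕ, ∃ r : ℕ, ‖x n‖ < c ^ E (r + 1) := by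
    intro n
    obtain ⟨k, hk⟩ := pow_unbounded_of_one_lt ‖x n‖ hc
    refine ⟨k, lt_of_lt_of_le hk (pow_le_pow_right₀ hc.le ?_)⟩
    have := hEr (k + 1); omega
  let blk : ℕ → ℕ := fun n => Nat.find (hex n)
  have hblk_up : ∀ n, ‖x n‖ < c ^ E (blk n + 1) := fun n => Nat.find_spec (hex n)
  have hblk_low : ∀ n, 1 ≤ blk n → c ^ E (blk n) ≤ ‖x n‖ := by
    intro n h1
    have hm := Nat.find_min (hex n) (show blk n - 1 < blk n by omega)
    have h2 : blk n - 1 + 1 = blk n := by omega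
    rw [h2] at hm
    exact not_lt.mp hm
  let S : ℕ → ℕ → Finset ℕ := fun i r =>
    (Finset.range (E (r + 1))).filter (fun n => 1 ≤ n ∧ n % N' = i ∧ blk n = r)
  have hSmem : ∀ i r n, n ∈ S i r → 1 ≤ n ∧ n % N' = i ∧ blk n = r ∧ n < E (r + 1) := by
    intro i r n hn
    simp only [S, Finset.mem_filter, Finset.mem_range] at hn
    exact ⟨hn.2.1, hn.2.2.1, hn.2.2.2, hn.1⟩
  have hmemS : ∀ n, 1 ≤ n → n ∈ S (n % N') (blk n) := by
    intro n hn
    have hcn : c ^ n ≤ ‖x n‖ := hx n hn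
    have hlt : c ^ n < c ^ E (blk n + 1) := lt_of_le_of_lt hcn (hblk_up n)
    have hn' : n < E (blk n + 1) := (pow_lt_pow_iff_right₀ hc).mp hlt
    exact Finset.mem_filter.mpr ⟨Finset.mem_range.mpr hn', hn, rfl, rfl⟩
  let ρ : ℕ → ℝ := fun r => if r = 0 then c else c ^ E r
  have hρpos : ∀ r, 0 < ρ r := by
    intro r
    by_cases h : r = 0 <;> simp only [ρ, h, if_true, if_false, reduceIte] <;> positivity
  have hρle : ∀ i r, ∀ n ∈ S i r, ρ r ≤ ‖x n‖ := by
    intro i r n hn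
    obtain ⟨hn1, _, hbn, _⟩ := hSmem i r n hn
    by_cases h : r = 0
    · subst h
      simp only [ρ, if_true, reduceIte]
      calc c = c ^ 1 := (pow_one c).symm
        _ ≤ c ^ n := pow_le_pow_right₀ hc.le hn1
        _ ≤ ‖x n‖ := hx n hn1
    · simp only [ρ, if_neg h]
      rw [← hbn]
      exact hblk_low n (by omega)
  have hxup : ∀ i r, ∀ n ∈ S i r, ‖x n‖ ≤ c ^ E (r + 1) := by
    intro i r n hn
    obtain ⟨_, _, hbn, _⟩ := hSmem i r n hn
    rw [← hbn]
    exact (hblk_up n).le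
  -- cardinality bounds
  have hcard : ∀ i r, (S i r).card ≤ E (r + 1) / N' + 1 := by
    intro i r
    have hsub : S i r ⊆ (Finset.range (E (r + 1))).filter (fun n => n % N' = i) := by
      intro n hn
      simp only [S, Finset.mem_filter, Finset.mem_range] at hn ⊢
      exact ⟨hn.1, hn.2.2.1⟩
    exact le_trans (Finset.card_le_card hsub) (count_aux _ _ _ hN'pos)
  have hKEY1 : ∀ i r, 2 * (Q * (S i r).card) ≤ E r := by
    intro i r
    have h1 := hcard i r
    have h2 : N' * (E (r + 1) / N') ≤ E (r + 1) := Nat.mul_div_le _ _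
    have h8 : 8 * (Q * (S i r).card) ≤ E (r + 1) + N' := by
      calc 8 * (Q * (S i r).card) = N' * (S i r).card := by rw [hN'def]; ring
        _ ≤ N' * (E (r + 1) / N' + 1) := Nat.mul_le_mul_left _ h1
        _ = N' * (E (r + 1) / N') + N' := by ring
        _ ≤ E (r + 1) + N' := Nat.add_le_add_right h2 N'
    have h3 := hEs r
    have h4 := hE8 r
    have h9 : N' = 8 * Q := hN'def
    generalize hu : Q * (S i r).card = u at h8 ⊢
    omega
  have hKEY2 : ∀ r r', r + 2 ≤ r' → 2 * E (r + 1) + 2 * (Q * (r' - r)) ≤ E r' := by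
    intro r r' hrr
    induction r', hrr using Nat.le_induction with
    | base =>
        have h1 : r + 2 - r = 2 := by omega
        rw [h1, hEs (r + 1)]
        omega
    | succ r' hrr ih =>
        have h1 : r' + 1 - r = (r' - r) + 1 := by omega
        have h2 : Q * ((r' - r) + 1) = Q * (r' - r) + Q := Nat.mul_succ Q (r' - r)
        rw [h1, h2, hEs r']
        generalize hb : Q * (r' - r) = b at ih ⊢
        omega
  have hexp : ∀ i r r', r + 2 ≤ r' →
      Q * ((S i r').card + (r' - r)) + E (r + 1) ≤ E r' := by
    intro i r r' hrr
    have h1 := hKEY1 i r'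
    have h2 := hKEY2 r r' hrr
    have h3 : Q * ((S i r').card + (r' - r)) = Q * (S i r').card + Q * (r' - r) := by ring
    rw [h3]
    generalize ha : Q * (S i r').card = a at h1 ⊢
    generalize hb : Q * (r' - r) = b at h2 ⊢
    omega
  -- damage bound
  have hdmg : ∀ i r r' n, n ∈ S i r → r + 2 ≤ r' →
      (((2:ℝ) ^ (S i r').card - 1) * 2 / ρ r') * ‖x n‖ ≤ (1/2 : ℝ) ^ (r' - r - 1) := by
    intro i r r' n hn hrr
    have hρ' : ρ r' = c ^ E r' := by
      simp only [ρ]; rw [if_neg (by omega)]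
    have hxu := hxup i r n hn
    have hσ1 : (1:ℝ) ≤ 2 ^ (S i r').card := by
      calc (1:ℝ) = 1 ^ (S i r').card := (one_pow _).symm
        _ ≤ 2 ^ (S i r').card := pow_le_pow_left₀ zero_le_one (by norm_num) _
    have h2c : (2:ℝ) ^ ((S i r').card + (r' - r)) ≤ c ^ (Q * ((S i r').card + (r' - r))) := by
      calc (2:ℝ) ^ ((S i r').card + (r' - r)) ≤ (c ^ Q) ^ ((S i r').card + (r' - r)) :=
            pow_le_pow_left₀ (by norm_num) hcQ _
        _ = c ^ (Q * ((S i r').card + (r' - r))) := by rw [← pow_mul]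
    have hmain : (2:ℝ) ^ ((S i r').card + (r' - r)) * c ^ E (r + 1) ≤ c ^ E r' := by
      calc (2:ℝ) ^ ((S i r').card + (r' - r)) * c ^ E (r + 1)
          ≤ c ^ (Q * ((S i r').card + (r' - r))) * c ^ E (r + 1) := by
            apply mul_le_mul_of_nonneg_right h2c (by positivity)
        _ = c ^ (Q * ((S i r').card + (r' - r)) + E (r + 1)) := (pow_add c _ _).symm
        _ ≤ c ^ E r' := pow_le_pow_right₀ hc.le (hexp i r r' hrr)
    rw [hρ', div_mul_eq_mul_div, div_le_iff₀ (by positivity)]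
    have hk : (S i r').card + (r' - r) = ((S i r').card + 1) + (r' - r - 1) := by omega
    have h2 : (2:ℝ) ^ ((S i r').card + (r' - r))
        = 2 ^ ((S i r').card + 1) * 2 ^ (r' - r - 1) := by
      rw [hk, pow_add]
    have h3 : (0:ℝ) < 2 ^ (r' - r - 1) := by positivity
    calc ((2:ℝ) ^ (S i r').card - 1) * 2 * ‖x n‖
        ≤ (2:ℝ) ^ (S i r').card * 2 * c ^ E (r + 1) := by
          apply mul_le_mul (by nlinarith) hxu (norm_nonneg _) (by positivity)
      _ = (2:ℝ) ^ ((S i r').card + 1) * c ^ E (r + 1) := by rw [pow_succ]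
      _ ≤ (1/2 : ℝ) ^ (r' - r - 1) * c ^ E r' := by
          rw [one_div, inv_pow, inv_mul_eq_div, le_div_iff₀ h3]
          calc (2:ℝ) ^ ((S i r').card + 1) * c ^ E (r + 1) * 2 ^ (r' - r - 1)
              = ((2:ℝ) ^ ((S i r').card + 1) * 2 ^ (r' - r - 1)) * c ^ E (r + 1) := by ring
            _ = (2:ℝ) ^ ((S i r').card + (r' - r)) * c ^ E (r + 1) := by rw [← h2]
            _ ≤ c ^ E r' := hmain
  -- geometric decay constants
  set d : ℝ := Real.sqrt c⁻¹ with hddef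
  have hd0 : 0 ≤ d := Real.sqrt_nonneg _
  have hd1 : d < 1 := by
    rw [hddef, show (1:ℝ) = Real.sqrt 1 from Real.sqrt_one.symm]
    exact Real.sqrt_lt_sqrt (by positivity) (inv_lt_one_of_one_lt₀ hc)
  have hdsq : d ^ 2 = c⁻¹ := Real.sq_sqrt (by positivity)
  have hinvpow : ∀ m r : ℕ, r ≤ 2 * m → (c ^ m)⁻¹ ≤ d ^ r := by
    intro m r h
    have h1 : (c ^ m)⁻¹ = d ^ (2 * m) := by
      rw [pow_mul, hdsq, inv_pow]
    rw [h1]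
    exact pow_le_pow_of_le_one hd0 hd1.le h
  -- per-class construction
  have hcls : ∀ i p : ℕ, ∃ F : X →L[𝕜] 𝕜,
      ∀ n, 1 ≤ n → n % N' = i → blk n % 2 = p → 1 ≤ ‖F (x n)‖ := by
    intro i p
    have hpick : ∀ (r : ℕ) (P : X →L[𝕜] 𝕜), ∃ h : X →L[𝕜] 𝕜,
        ‖h‖ ≤ ((2:ℝ) ^ (S i r).card - 1) * 2 / ρ r ∧
        ∀ n ∈ S i r, 2 ≤ ‖P (x n) + h (x n)‖ :=
      fun r P => auxQ x 2 two_pos (S i r).card (S i r) rfl P (ρ r) (hρpos r) (hρle i r)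
    choose pickF hpickb hpickv using hpick
    let Psum : ℕ → X →L[𝕜] 𝕜 := fun r =>
      Nat.rec (if 0 % 2 = p then pickF 0 0 else 0)
        (fun r' prev => prev + (if (r' + 1) % 2 = p then pickF (r' + 1) prev else 0)) r
    have hPs0 : Psum 0 = if 0 % 2 = p then pickF 0 0 else 0 := rfl
    have hPsS : ∀ r, Psum (r + 1)
        = Psum r + (if (r + 1) % 2 = p then pickF (r + 1) (Psum r) else 0) := fun _ => rfl
    let H : ℕ → X →L[𝕜] 𝕜 := fun r =>
      match r with
      | 0 => Psum 0
      | (r' + 1) => Psum (r' + 1) - Psum r'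
    have hH0 : H 0 = Psum 0 := rfl
    have hHdef : ∀ r, H (r + 1) = Psum (r + 1) - Psum r := fun _ => rfl
    have hHS : ∀ r, H (r + 1) = if (r + 1) % 2 = p then pickF (r + 1) (Psum r) else 0 := by
      intro r
      rw [hHdef r, hPsS r]
      exact add_sub_cancel_left _ _
    have hbnn : ∀ r, (0:ℝ) ≤ ((2:ℝ) ^ (S i r).card - 1) * 2 / ρ r := by
      intro r
      have h1 : (1:ℝ) ≤ 2 ^ (S i r).card := by
        calc (1:ℝ) = 1 ^ (S i r).card := (one_pow _).symm
          _ ≤ 2 ^ (S i r).card := pow_le_pow_left₀ zero_le_one (by norm_num) _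
      apply div_nonneg (by nlinarith) (hρpos r).le
    have hHb : ∀ r, ‖H r‖ ≤ ((2:ℝ) ^ (S i r).card - 1) * 2 / ρ r := by
      intro r
      cases r with
      | zero =>
          rw [hH0, hPs0]
          split_ifs with h
          · exact hpickb 0 0
          · simpa using hbnn 0
      | succ r' =>
          rw [hHS r']
          split_ifs with h
          · exact hpickb _ _
          · simpa using hbnn (r' + 1)
    have hHpar : ∀ r, r % 2 ≠ p → H r = 0 := by
      intro r hr
      cases r with
      | zero => rw [hH0, hPs0, if_neg hr]
      | succ r' => rw [hHS r', if_neg hr]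
    have hval : ∀ r, r % 2 = p → ∀ n ∈ S i r, 2 ≤ ‖Psum r (x n)‖ := by
      intro r hr n hn
      cases r with
      | zero =>
          have hsp := hpickv 0 0 n hn
          rw [hPs0, if_pos hr]
          simpa using hsp
      | succ r' =>
          have hsp := hpickv (r' + 1) (Psum r') n hn
          rw [hPsS r', if_pos hr]
          simpa [ContinuousLinearMap.add_apply] using hsp
    -- geometric decay of H
    have hHgeo : ∀ r, 1 ≤ r → ‖H r‖ ≤ 2 * d ^ r := by
      intro r hr
      have hρr : ρ r = c ^ E r := by
        simp only [ρ]; rw [if_neg (by omega)]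
      have hσ := hKEY1 i r
      have h1 : (2:ℝ) ^ (S i r).card ≤ c ^ (Q * (S i r).card) := by
        calc (2:ℝ) ^ (S i r).card ≤ (c ^ Q) ^ (S i r).card :=
              pow_le_pow_left₀ (by norm_num) hcQ _
          _ = c ^ (Q * (S i r).card) := by rw [← pow_mul]
      have hEr' := hEr r
      generalize hu : Q * (S i r).card = u at hσ h1
      have h2 : E r = (E r - u) + u := by omega
      have h3 : c ^ E r = c ^ (E r - u) * c ^ u := by rw [← pow_add, ← h2]
      have h4 : r ≤ 2 * (E r - u) := by omega
      calc ‖H r‖ ≤ ((2:ℝ) ^ (S i r).card - 1) * 2 / ρ r := hHb r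
        _ ≤ (2:ℝ) ^ (S i r).card * 2 / c ^ E r := by
            rw [hρr]
            have hs1 : (1:ℝ) ≤ 2 ^ (S i r).card := by
              calc (1:ℝ) = 1 ^ (S i r).card := (one_pow _).symm
                _ ≤ 2 ^ (S i r).card := pow_le_pow_left₀ zero_le_one (by norm_num) _
            apply (div_le_div_iff_of_pos_right (by positivity)).mpr
            nlinarith
        _ = 2 * ((2:ℝ) ^ (S i r).card / c ^ E r) := by ring
        _ ≤ 2 * (c ^ u / c ^ E r) := by
            apply mul_le_mul_of_nonneg_left ((div_le_div_iff_of_pos_right (by positivity)).mpr h1) (by norm_num)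
        _ = 2 * (c ^ (E r - u))⁻¹ := by
            rw [h3, mul_comm (c ^ (E r - u)) (c ^ u), div_mul_eq_div_div,
              div_self (pow_ne_zero u (ne_of_gt hc0)), one_div]
        _ ≤ 2 * d ^ r := by
            apply mul_le_mul_of_nonneg_left (hinvpow _ _ h4) (by norm_num)
    have hcauchy : CauchySeq Psum := by
      apply cauchySeq_of_le_geometric d 2 hd1
      intro r
      rw [dist_eq_norm, norm_sub_rev, ← hHdef r]
      calc ‖H (r + 1)‖ ≤ 2 * d ^ (r + 1) := hHgeo (r + 1) (by omega)
        _ ≤ 2 * d ^ r := by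
            apply mul_le_mul_of_nonneg_left (pow_le_pow_of_le_one hd0 hd1.le (by omega)) (by norm_num)
    obtain ⟨F, hFlim⟩ := cauchySeq_tendsto_of_complete hcauchy
    refine ⟨F, ?_⟩
    intro n hn1 hni hnp
    have hnS : n ∈ S i (blk n) := by
      rw [← hni]; exact hmemS n hn1
    have h2 : 2 ≤ ‖Psum (blk n) (x n)‖ := hval (blk n) hnp n hnS
    set r := blk n with hrdef
    have htail : ∀ R, r + 1 ≤ R →
        ‖Psum R (x n) - Psum r (x n)‖ ≤ 1 - 2 * (1/2 : ℝ) ^ (R - r) := by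
      intro R hR
      induction R, hR using Nat.le_induction with
      | base =>
          have hz : H (r + 1) = 0 := hHpar (r + 1) (by omega)
          have hd : Psum (r + 1) (x n) - Psum r (x n) = (H (r + 1)) (x n) := by
            rw [hHdef r]; simp [ContinuousLinearMap.sub_apply]
          rw [hd, hz]
          have : r + 1 - r = 1 := by omega
          rw [this]
          norm_num
      | succ R hR ih =>
          have hterm : ‖(H (R + 1)) (x n)‖ ≤ (1/2 : ℝ) ^ (R - r) := by
            by_cases hp2 : (R + 1) % 2 = p
            · have hRr : r + 2 ≤ R + 1 := by omega
              calc ‖(H (R + 1)) (x n)‖ ≤ ‖H (R + 1)‖ * ‖x n‖ := (H (R + 1)).le_opNorm _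
                _ ≤ (((2:ℝ) ^ (S i (R + 1)).card - 1) * 2 / ρ (R + 1)) * ‖x n‖ :=
                    mul_le_mul_of_nonneg_right (hHb (R + 1)) (norm_nonneg _)
                _ ≤ (1/2 : ℝ) ^ ((R + 1) - r - 1) := hdmg i r (R + 1) n hnS hRr
                _ = (1/2 : ℝ) ^ (R - r) := by congr 1; omega
            · rw [hHpar (R + 1) hp2]
              simp only [ContinuousLinearMap.zero_apply, norm_zero]
              positivity
          have hsplit : Psum (R + 1) (x n) - Psum r (x n)
              = (Psum R (x n) - Psum r (x n)) + (H (R + 1)) (x n) := by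
            rw [hHdef R]
            simp only [ContinuousLinearMap.sub_apply]
            ring
          have hRr1 : R + 1 - r = (R - r) + 1 := by omega
          calc ‖Psum (R + 1) (x n) - Psum r (x n)‖
              ≤ ‖Psum R (x n) - Psum r (x n)‖ + ‖(H (R + 1)) (x n)‖ := by
                rw [hsplit]; exact norm_add_le _ _
            _ ≤ (1 - 2 * (1/2 : ℝ) ^ (R - r)) + (1/2 : ℝ) ^ (R - r) := add_le_add ih hterm
            _ = 1 - 2 * (1/2 : ℝ) ^ (R + 1 - r) := by
                rw [hRr1, pow_succ]; ring
    have hbound : ∀ R, r + 1 ≤ R → 1 ≤ ‖Psum R (x n)‖ := by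
      intro R hR
      have h3 := htail R hR
      have h4 : ‖Psum r (x n)‖ - ‖Psum R (x n)‖ ≤ ‖Psum R (x n) - Psum r (x n)‖ := by
        rw [norm_sub_rev]
        exact norm_sub_norm_le _ _
      have h5 : (0:ℝ) ≤ 2 * (1/2 : ℝ) ^ (R - r) := by positivity
      linarith
    have hevt : Tendsto (fun R => Psum R (x n)) atTop (𝓝 (F (x n))) := by
      have hcont : Continuous (fun φ : X →L[𝕜] 𝕜 => φ (x n)) :=
        (ContinuousLinearMap.apply 𝕜 𝕜 (x n)).continuous
      exact (hcont.tendsto F).comp hFlim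
    exact ge_of_tendsto hevt.norm (eventually_atTop.mpr ⟨r + 1, hbound⟩)
  choose Fc hFc using hcls
  refine ⟨2 * N', fun k => Fc (k.val % N') (k.val / N'), by omega, ?_⟩
  intro n hn
  have h1 : n % N' < N' := Nat.mod_lt _ hN'pos
  have hb2 : blk n % 2 ≤ 1 := by omega
  have h2 : N' * (blk n % 2) ≤ N' * 1 := Nat.mul_le_mul_left _ hb2
  have hklt : n % N' + N' * (blk n % 2) < 2 * N' := by
    have := Nat.add_lt_add_of_lt_of_le h1 h2
    omega
  refine ⟨⟨n % N' + N' * (blk n % 2), hklt⟩, ?_⟩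
  have e1 : (n % N' + N' * (blk n % 2)) % N' = n % N' := by
    rw [Nat.add_mul_mod_self_left]
    exact Nat.mod_eq_of_lt h1
  have e2 : (n % N' + N' * (blk n % 2)) / N' = blk n % 2 := by
    rw [Nat.add_mul_div_left _ _ hN'pos, Nat.div_eq_of_lt h1]
    omega
  show 1 ≤ ‖Fc ((n % N' + N' * (blk n % 2)) % N') ((n % N' + N' * (blk n % 2)) / N') (x n)‖
  rw [e1, e2]
  exact hFc (n % N') (blk n % 2) n hn rfl rfl
end

section
/- Let X be a Banach space, let c > 2, and let (x_n)_{n≥1} be a sequence in X with ‖x_n‖ = c^n for all n ≥ 1. Then there exists a continuous linear functional f ∈ X* such that |f(x_n)| ≥ (c − 2)/(c − 1) for all n ≥ 1. -/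
open Finset

noncomputable def phaseK {𝕜 : Type*} [RCLike 𝕜] (s : 𝕜) : 𝕜 :=
  if s = 0 then 1 else s / (‖s‖ : 𝕜)

lemma norm_phaseK {𝕜 : Type*} [RCLike 𝕜] (s : 𝕜) : ‖phaseK s‖ = 1 := by
  unfold phaseK
  split_ifs with h
  · simp
  · have hs : ‖s‖ ≠ 0 := norm_ne_zero_iff.mpr h
    rw [norm_div]
    simp [abs_of_nonneg (norm_nonneg s), hs]

lemma norm_add_phaseK {𝕜 : Type*} [RCLike 𝕜] (s : 𝕜) : ‖s + phaseK s‖ = ‖s‖ + 1 := by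
  unfold phaseK
  split_ifs with h
  · simp [h]
  · have hs : ‖s‖ ≠ 0 := norm_ne_zero_iff.mpr h
    have hsk : (‖s‖ : 𝕜) ≠ 0 := by
      simpa using hs
    have key : s + s / (‖s‖ : 𝕜) = (((1 + ‖s‖⁻¹ : ℝ)) : 𝕜) * s := by
      push_cast
      field_simp
    rw [key, norm_mul]
    have h1 : ‖((1 + ‖s‖⁻¹ : ℝ) : 𝕜)‖ = 1 + ‖s‖⁻¹ := by
      rw [RCLike.norm_ofReal, abs_of_nonneg]
      positivity
    rw [h1]
    field_simp

noncomputable def auxS {𝕜 : Type*} [RCLike 𝕜] {X : Type*} [NormedAddCommGroup X]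
    [NormedSpace 𝕜 X] (c : ℝ) (x : ℕ → X) (g : ℕ → X →L[𝕜] 𝕜) : ℕ → X →L[𝕜] 𝕜
  | 0 => 0
  | n + 1 => auxS c x g n +
      (((c : 𝕜) ^ (n + 1))⁻¹ * phaseK (auxS c x g n (x (n + 1)))) • g (n + 1)

/-- Let `X` be a Banach space over `𝕜 = ℝ` or `ℂ`, let `c > 2`, and let `(x_n)_{n ≥ 1}` be a
sequence in `X` with `‖x n‖ = c ^ n` for all `n ≥ 1`. Then there is a continuous linear
functional `f` with `|f (x n)| ≥ (c - 2)/(c - 1)` for all `n ≥ 1`. -/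
theorem stmt_2 {𝕜 : Type*} [RCLike 𝕜] {X : Type*} [NormedAddCommGroup X]
    [NormedSpace 𝕜 X] [CompleteSpace X] {c : ℝ} (hc : 2 < c) (x : ℕ → X)
    (hx : ∀ n : ℕ, 1 ≤ n → ‖x n‖ = c ^ n) :
    ∃ f : X →L[𝕜] 𝕜, ∀ n : ℕ, 1 ≤ n → (c - 2) / (c - 1) ≤ ‖f (x n)‖ := by
  have hc0 : (0 : ℝ) < c := by linarith
  have hc1 : (1 : ℝ) < c := by linarith
  have hcne : (c : 𝕜) ≠ 0 := by
    simpa using (ne_of_gt hc0)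
  -- choose norming functionals
  have hex : ∀ n : ℕ, ∃ g : X →L[𝕜] 𝕜, ‖g‖ ≤ 1 ∧ (1 ≤ n → g (x n) = (‖x n‖ : 𝕜)) := by
    intro n
    rcases Nat.eq_zero_or_pos n with h0 | h1
    · exact ⟨0, by simp, by omega⟩
    · have hxne : x n ≠ 0 := by
        intro h
        have := hx n h1
        rw [h, norm_zero] at this
        have : (0 : ℝ) < c ^ n := pow_pos hc0 n
        linarith
      obtain ⟨g, hg1, hg2⟩ := exists_dual_vector 𝕜 (x n) (norm_ne_zero_iff.mpr hxne)
      exact ⟨g, le_of_eq hg1, fun _ => hg2⟩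
  choose g hg1 hg2 using hex
  set S : ℕ → X →L[𝕜] 𝕜 := auxS c x g with hS
  set h : ℕ → X →L[𝕜] 𝕜 := fun n => S n - S (n - 1) with hh
  have hh0 : h 0 = 0 := by simp [hh, hS, auxS]
  have hhsucc : ∀ n : ℕ, h (n + 1) =
      (((c : 𝕜) ^ (n + 1))⁻¹ * phaseK (S n (x (n + 1)))) • g (n + 1) := by
    intro n
    simp only [hh, hS]
    show auxS c x g (n+1) - auxS c x g n = _
    rw [auxS]
    abel
  -- norm bound on h
  have hnormc : ‖(c : 𝕜)‖ = c := by
    rw [RCLike.norm_ofReal, abs_of_pos hc0]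
  have hhnorm : ∀ n : ℕ, ‖h n‖ ≤ (c⁻¹) ^ n := by
    intro n
    cases n with
    | zero => simp [hh0]
    | succ m =>
      rw [hhsucc m]
      refine le_trans (ContinuousLinearMap.opNorm_smul_le _ _) ?_
      rw [norm_mul, norm_inv, norm_pow, hnormc, norm_phaseK, mul_one]
      calc (c ^ (m+1))⁻¹ * ‖g (m+1)‖ ≤ (c ^ (m+1))⁻¹ * 1 := by
            apply mul_le_mul_of_nonneg_left (hg1 _)
            positivity
        _ = (c⁻¹) ^ (m+1) := by rw [mul_one, inv_pow]
  have hr1 : c⁻¹ < 1 := inv_lt_one_of_one_lt₀ hc1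
  have hr0 : (0:ℝ) ≤ c⁻¹ := by positivity
  have hsumgeo : Summable (fun n : ℕ => (c⁻¹) ^ n) :=
    summable_geometric_of_lt_one hr0 hr1
  have hsum : Summable h := by
    apply Summable.of_norm_bounded hsumgeo hhnorm
  set f : X →L[𝕜] 𝕜 := ∑' n, h n with hf
  -- partial sums telescope
  have hpart : ∀ n : ℕ, ∑ k ∈ Finset.range (n + 1), h k = S n := by
    intro n
    induction n with
    | zero => simp [hh0, hS, auxS]
    | succ m ih =>
      rw [Finset.sum_range_succ, ih, hh]
      simp
  -- key lower bound on S n (x n)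
  have hkey : ∀ n : ℕ, 1 ≤ n → (1 : ℝ) ≤ ‖S n (x n)‖ := by
    intro n hn
    obtain ⟨m, rfl⟩ : ∃ m, n = m + 1 := ⟨n - 1, by omega⟩
    have : S (m + 1) (x (m + 1)) =
        S m (x (m + 1)) + phaseK (S m (x (m + 1))) := by
      show auxS c x g (m + 1) (x (m + 1)) = _
      rw [auxS]
      simp only [ContinuousLinearMap.add_apply, ContinuousLinearMap.smul_apply]
      rw [hg2 (m+1) (by omega), hx (m+1) (by omega)]
      push_cast
      rw [smul_eq_mul]
      field_simp
      rfl
    rw [this, norm_add_phaseK]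
    have := norm_nonneg (S m (x (m + 1)))
    linarith
  refine ⟨f, fun n hn => ?_⟩
  -- summability of evaluations
  have hsumev : Summable (fun k => h k (x n)) := by
    apply Summable.of_norm_bounded (g := fun k => (c⁻¹) ^ k * ‖x n‖)
      (hsumgeo.mul_right _)
    intro k
    calc ‖h k (x n)‖ ≤ ‖h k‖ * ‖x n‖ := (h k).le_opNorm _
      _ ≤ (c⁻¹) ^ k * ‖x n‖ := by
          apply mul_le_mul_of_nonneg_right (hhnorm k) (norm_nonneg _)
  have hfev : f (x n) = ∑' k, h k (x n) := by
    rw [hf]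
    exact (ContinuousLinearMap.apply 𝕜 𝕜 (x n)).map_tsum hsum
  have hsplit : ∑' k, h k (x n) =
      (∑ k ∈ Finset.range (n + 1), h k (x n)) + ∑' k, h (k + (n + 1)) (x n) :=
    (hsumev.sum_add_tsum_nat_add (n + 1)).symm
  -- tail bound
  set r : ℝ := c⁻¹ with hrdef
  have htailsum : HasSum (fun k : ℕ => r ^ (k + (n + 1)) * c ^ n)
      ((r ^ (n + 1) * (1 - r)⁻¹) * c ^ n) := by
    have := ((hasSum_geometric_of_lt_one hr0 hr1).mul_left (r ^ (n + 1))).mul_right (c ^ n)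
    have e : (fun k : ℕ => r ^ (k + (n + 1)) * c ^ n) = fun i => r ^ (n + 1) * r ^ i * c ^ n := by
      funext k
      ring
    rw [e]
    exact this
  have htailval : (r ^ (n + 1) * (1 - r)⁻¹) * c ^ n = 1 / (c - 1) := by
    have hcn : (c : ℝ) ^ n ≠ 0 := by positivity
    have h1 : (1 - c⁻¹) = (c - 1) / c := by field_simp
    have h2 : c⁻¹ ^ (n + 1) * c ^ n = c⁻¹ := by
      rw [inv_pow, pow_succ, mul_inv]
      field_simp
    have hc1' : c - 1 ≠ 0 := by linarith
    have hc' : c ≠ 0 := by linarith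
    rw [hrdef, mul_right_comm, h2, h1]
    field_simp
  have htail : ‖∑' k, h (k + (n + 1)) (x n)‖ ≤ 1 / (c - 1) := by
    rw [← htailval]
    apply tsum_of_norm_bounded htailsum
    intro k
    calc ‖h (k + (n + 1)) (x n)‖ ≤ ‖h (k + (n + 1))‖ * ‖x n‖ := (h _).le_opNorm _
      _ ≤ r ^ (k + (n + 1)) * c ^ n := by
          rw [hx n hn]
          exact mul_le_mul_of_nonneg_right (hhnorm _) (by positivity)
  have hhead : (1 : ℝ) ≤ ‖∑ k ∈ Finset.range (n + 1), h k (x n)‖ := by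
    have : ∑ k ∈ Finset.range (n + 1), h k (x n) = S n (x n) := by
      rw [← hpart n]
      simp
    rw [this]
    exact hkey n hn
  have hlow : 1 - 1 / (c - 1) ≤ ‖f (x n)‖ := by
    rw [hfev, hsplit]
    calc 1 - 1 / (c - 1)
        ≤ ‖∑ k ∈ Finset.range (n + 1), h k (x n)‖ - ‖∑' k, h (k + (n + 1)) (x n)‖ := by
          linarith
      _ ≤ ‖(∑ k ∈ Finset.range (n + 1), h k (x n)) + ∑' k, h (k + (n + 1)) (x n)‖ := by
          have h3 := norm_sub_norm_le (∑ k ∈ Finset.range (n + 1), h k (x n))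
            (-(∑' k, h (k + (n + 1)) (x n)))
          rw [sub_neg_eq_add, norm_neg] at h3
          linarith
  have heq : (c - 2) / (c - 1) = 1 - 1 / (c - 1) := by
    rw [eq_sub_iff_add_eq, ← add_div, div_eq_one_iff_eq (by linarith : c - 1 ≠ 0)]
    ring
  linarith
end

section
/- Let X be a Banach space and let Y be a norming subspace of X*, i.e. a closed linear subspace Y ⊆ X* for which there exists C > 0 such that ‖x‖ ≤ C · sup{ |f(x)| : f ∈ Y, ‖f‖ ≤ 1 } for every x ∈ X. Let c > 1 and let (x_n)_{n≥1} be a sequence in X with ‖x_n‖ ≥ c^n for all n ≥ 1. Then 0 does not belong to the closure of {x_n : n ≥ 1} in the σ(X, Y) topology (the topology on X generated by the seminorms x ↦ |f(x)| for f ∈ Y). -/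
private noncomputable def buildAux {α : Type*} (d : α) (F : ℕ → (ℕ → α) → α) : ℕ → ℕ → α
  | 0 => fun _ => d
  | (m+1) => fun n => if n = m then F m (buildAux d F m) else buildAux d F m n

private noncomputable def build {α : Type*} (d : α) (F : ℕ → (ℕ → α) → α) (n : ℕ) : α :=
  F n (buildAux d F n)

private theorem buildAux_eq {α : Type*} (d : α) (F : ℕ → (ℕ → α) → α) :
    ∀ m n, n < m → buildAux d F m n = build d F n := by
  intro m
  induction m with
  | zero => intro n hn; omega
  | succ m ih =>
    intro n hn
    by_cases h : n = m
    · subst h; simp [buildAux, build]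
    · have h' : n < m := by omega
      simp [buildAux, h, ih n h']

private theorem phase_lemma {𝕜 : Type*} [RCLike 𝕜] (H a : 𝕜) (t : ℝ) (ht : 0 ≤ t) :
    ∃ σ : 𝕜, ‖σ‖ = 1 ∧ ‖H + (t : 𝕜) * (σ * a)‖ = ‖H‖ + t * ‖a‖ := by
  by_cases ha : a = 0
  · exact ⟨1, norm_one, by simp [ha, mul_nonneg ht (norm_nonneg a)]⟩
  · have hna : (0:ℝ) < ‖a‖ := norm_pos_iff.mpr ha
    set φ : 𝕜 := if H = 0 then 1 else H * ((‖H‖ : ℝ) : 𝕜)⁻¹ with hφ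
    have hφ1 : ‖φ‖ = 1 := by
      by_cases hH : H = 0
      · simp [hφ, hH]
      · have : (0:ℝ) < ‖H‖ := norm_pos_iff.mpr hH
        simp [hφ, hH, norm_mul, norm_inv, RCLike.norm_ofReal, abs_of_pos this,
          mul_inv_cancel₀ this.ne']
    have hφH : φ * ((‖H‖ : ℝ) : 𝕜) = H := by
      by_cases hH : H = 0
      · simp [hφ, hH]
      · have h0 : ((‖H‖ : ℝ) : 𝕜) ≠ 0 := by
          simp [norm_eq_zero, hH]
        rw [hφ, if_neg hH, inv_mul_cancel_right₀ h0]
    refine ⟨φ * (starRingEnd 𝕜 a) * ((‖a‖ : ℝ) : 𝕜)⁻¹, ?_, ?_⟩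
    · simp [norm_mul, hφ1, norm_inv, RCLike.norm_ofReal, abs_of_pos hna, RCLike.norm_conj,
        mul_inv_cancel₀ hna.ne']
    · have ha' : ((‖a‖ : ℝ) : 𝕜) ≠ 0 := by simp [hna.ne']
      have h2 : φ * (starRingEnd 𝕜 a) * ((‖a‖:ℝ):𝕜)⁻¹ * a = φ * ((‖a‖:ℝ):𝕜) := by
        calc φ * (starRingEnd 𝕜 a) * ((‖a‖:ℝ):𝕜)⁻¹ * a
            = φ * ((starRingEnd 𝕜 a) * a) * ((‖a‖:ℝ):𝕜)⁻¹ := by ring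
          _ = φ * ((‖a‖:ℝ):𝕜)^2 * ((‖a‖:ℝ):𝕜)⁻¹ := by rw [RCLike.conj_mul]
          _ = φ * ((‖a‖:ℝ):𝕜) := by rw [sq]; field_simp
      have h3 : H + (t:𝕜) * (φ * (starRingEnd 𝕜 a) * ((‖a‖:ℝ):𝕜)⁻¹ * a)
          = φ * (((‖H‖ + t*‖a‖ : ℝ)):𝕜) := by
        rw [h2]
        conv_lhs => rw [← hφH]
        push_cast; ring
      rw [h3, norm_mul, hφ1, one_mul, RCLike.norm_ofReal, abs_of_nonneg (by positivity)]

private theorem not_mem_closure_of_sep {α : Type*} (T : TopologicalSpace α) (s U : Set α)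
    (a : α) (hU : @IsOpen α T U) (ha : a ∈ U) (hdisj : ∀ y ∈ s, y ∉ U) :
    a ∉ @closure α T s := by
  letI := T
  intro h
  obtain ⟨y, hyU, hys⟩ := mem_closure_iff.mp h U hU ha
  exact hdisj y hys hyU

/-- Let `X` be a Banach space over `𝕜 = ℝ` or `ℂ` and `Y` a norming closed subspace of `X*`:
there is `C > 0` with `‖x‖ ≤ C * sup {|f x| : f ∈ Y, ‖f‖ ≤ 1}` for all `x`. If `c > 1` and
`‖x n‖ ≥ c ^ n` for all `n ≥ 1`, then `0` is not in the `σ(X, Y)`-closure of `{x_n : n ≥ 1}`,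
where `σ(X, Y)` is the coarsest topology on `X` making every `f ∈ Y` continuous (induced by
the map `X → (Y → 𝕜)`). -/
theorem stmt_3 {𝕜 : Type*} [RCLike 𝕜] {X : Type*} [NormedAddCommGroup X]
    [NormedSpace 𝕜 X] [CompleteSpace X] (Y : Submodule 𝕜 (X →L[𝕜] 𝕜))
    (hYclosed : IsClosed (Y : Set (X →L[𝕜] 𝕜)))
    (hYnorming : ∃ C : ℝ, 0 < C ∧ ∀ x : X,
      ‖x‖ ≤ C * sSup ((fun f : X →L[𝕜] 𝕜 => ‖f x‖) '' {f | f ∈ Y ∧ ‖f‖ ≤ 1}))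
    {c : ℝ} (hc : 1 < c) (x : ℕ → X) (hx : ∀ n : ℕ, 1 ≤ n → c ^ n ≤ ‖x n‖) :
    (0 : X) ∉ @closure X
      (TopologicalSpace.induced (fun (v : X) (f : Y) => (f : X →L[𝕜] 𝕜) v) Pi.topologicalSpace)
      {y : X | ∃ n : ℕ, 1 ≤ n ∧ y = x n} := by
  obtain ⟨C, hC, hnorm⟩ := hYnorming
  have hc0 : (0:ℝ) < c := lt_trans one_pos hc
  set θ : ℝ := (c + 1) / (2 * c) with hθdef
  have hθpos : 0 < θ := by positivity
  have hθ1 : θ < 1 := by rw [hθdef, div_lt_one (by positivity)]; linarith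
  have hθc : 1 < θ * c := by
    rw [hθdef, div_mul_eq_mul_div, lt_div_iff₀ (by positivity : (0:ℝ) < 2*c)]
    nlinarith
  obtain ⟨K0, hK0⟩ := exists_pow_lt_of_lt_one
    (div_pos (by linarith : (0:ℝ) < 1-θ) (by positivity : (0:ℝ) < 4*C)) hθ1
  set K := K0 + 1 with hKdef
  have hKpos : 0 < K := Nat.succ_pos _
  have hK : θ ^ K < (1 - θ)/(4*C) :=
    lt_of_le_of_lt (pow_le_pow_of_le_one hθpos.le hθ1.le (Nat.le_succ _)) hK0
  have hxpos : ∀ n, 1 ≤ n → 0 < ‖x n‖ :=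
    fun n hn => lt_of_lt_of_le (pow_pos hc0 n) (hx n hn)
  -- norming functionals
  have hgex : ∀ n, 1 ≤ n → ∃ h : X →L[𝕜] 𝕜, h ∈ Y ∧ ‖h‖ ≤ 1 ∧
      ‖x n‖ / (2*C) < ‖h (x n)‖ := by
    intro n hn
    have hne : ((fun f : X →L[𝕜] 𝕜 => ‖f (x n)‖) '' {f | f ∈ Y ∧ ‖f‖ ≤ 1}).Nonempty :=
      ⟨0, ⟨0, ⟨Y.zero_mem, by simp⟩, by simp⟩⟩
    have h2 : ‖x n‖ / C ≤ sSup ((fun f : X →L[𝕜] 𝕜 => ‖f (x n)‖) '' {f | f ∈ Y ∧ ‖f‖ ≤ 1}) :=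
      (div_le_iff₀ hC).mpr (by linarith [hnorm (x n)])
    have h1 : ‖x n‖ / (2*C) < ‖x n‖ / C :=
      div_lt_div_of_pos_left (hxpos n hn) hC (by linarith)
    obtain ⟨s, hs, hlt⟩ := exists_lt_of_lt_csSup hne (lt_of_lt_of_le h1 h2)
    obtain ⟨h, ⟨hhY, hh1⟩, rfl⟩ := hs
    exact ⟨h, hhY, hh1, hlt⟩
  -- existence of aligned functionals
  have keyex : ∀ (n : ℕ) (H : 𝕜), ∃ g : X →L[𝕜] 𝕜, g ∈ Y ∧ ‖g‖ ≤ 1 ∧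
      θ^n * ‖g (x n)‖ ≤ ‖H + ((θ^n : ℝ) : 𝕜) * g (x n)‖ ∧
      (1 ≤ n → ‖x n‖ / (2*C) ≤ ‖g (x n)‖) := by
    intro n H
    by_cases hn : 1 ≤ n
    · obtain ⟨h, hhY, hh1, hval⟩ := hgex n hn
      obtain ⟨σ, hσ, heq⟩ := phase_lemma H (h (x n)) (θ^n) (by positivity)
      have happ : (σ • h) (x n) = σ * h (x n) := rfl
      refine ⟨σ • h, Y.smul_mem σ hhY, ?_, ?_, ?_⟩
      · calc ‖σ • h‖ = ‖σ‖ * ‖h‖ := norm_smul σ h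
          _ ≤ 1 := by rw [hσ, one_mul]; exact hh1
      · rw [happ, heq, norm_mul, hσ, one_mul]
        nlinarith [norm_nonneg H, pow_nonneg hθpos.le n, norm_nonneg (h (x n))]
      · intro _
        rw [happ, norm_mul, hσ, one_mul]; exact hval.le
    · exact ⟨0, Y.zero_mem, by simp, by simp, fun h => absurd h hn⟩
  -- recursive construction
  let coef : ℕ → ℕ → 𝕜 := fun j k => if k % K = j then ((θ^k : ℝ) : 𝕜) else 0
  let Hs : (ℕ → (X →L[𝕜] 𝕜)) → ℕ → 𝕜 :=
    fun p n => ∑ k ∈ Finset.range n, coef (n % K) k * (p k) (x n)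
  let F : ℕ → (ℕ → (X →L[𝕜] 𝕜)) → (X →L[𝕜] 𝕜) := fun n p => (keyex n (Hs p n)).choose
  let G : ℕ → (X →L[𝕜] 𝕜) := build 0 F
  have hGspec : ∀ n, G n ∈ Y ∧ ‖G n‖ ≤ 1 ∧
      θ^n * ‖G n (x n)‖ ≤ ‖Hs G n + ((θ^n : ℝ) : 𝕜) * G n (x n)‖ ∧
      (1 ≤ n → ‖x n‖ / (2*C) ≤ ‖G n (x n)‖) := by
    intro n
    have hHsn : Hs (buildAux 0 F n) n = Hs G n :=
      Finset.sum_congr rfl fun k hk => by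
        rw [buildAux_eq 0 F n k (Finset.mem_range.mp hk)]
    have h := (keyex n (Hs (buildAux 0 F n) n)).choose_spec
    have hGn : G n = (keyex n (Hs (buildAux 0 F n) n)).choose := rfl
    rw [← hGn] at h
    rw [hHsn] at h
    exact h
  have hnormcoef : ∀ j k, ‖coef j k‖ ≤ θ ^ k := by
    intro j k
    by_cases h : k % K = j
    · simp [coef, h, RCLike.norm_ofReal, abs_of_nonneg (pow_nonneg hθpos.le k),
        abs_of_pos hθpos]
    · simp [coef, h, pow_nonneg hθpos.le k]
  have hsummable : ∀ j, Summable (fun k => coef j k • G k) := by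
    intro j
    refine Summable.of_norm_bounded (summable_geometric_of_lt_one hθpos.le hθ1) fun k => ?_
    refine le_trans (ContinuousLinearMap.opNorm_smul_le _ _) ?_
    calc ‖coef j k‖ * ‖G k‖ ≤ θ^k * 1 :=
          mul_le_mul (hnormcoef j k) (hGspec k).2.1 (norm_nonneg _) (pow_nonneg hθpos.le k)
      _ = θ^k := mul_one _
  let f : ℕ → (X →L[𝕜] 𝕜) := fun j => ∑' k, coef j k • G k
  have hfY : ∀ j, f j ∈ Y := by
    intro j
    refine hYclosed.mem_of_tendsto (hsummable j).hasSum (Filter.Eventually.of_forall fun s => ?_)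
    exact Submodule.sum_mem Y fun k _ => Submodule.smul_mem Y _ (hGspec k).1
  have hscalar : ∀ j n, Summable (fun k => coef j k * G k (x n)) ∧
      f j (x n) = ∑' k, coef j k * G k (x n) := by
    intro j n
    have h1 := (hsummable j).hasSum.mapL (ContinuousLinearMap.apply 𝕜 𝕜 (x n))
    have h2 : (fun k => (ContinuousLinearMap.apply 𝕜 𝕜 (x n)) (coef j k • G k)) =
        fun k => coef j k * G k (x n) := by
      funext k
      simp [ContinuousLinearMap.apply_apply, smul_eq_mul]
    rw [h2] at h1
    exact ⟨h1.summable, h1.tsum_eq.symm⟩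
  -- main estimate
  have hmain : ∀ n, 1 ≤ n → θ * c / (4*C) ≤ ‖f (n % K) (x n)‖ := by
    intro n hn
    obtain ⟨hsum, hval⟩ := hscalar (n % K) n
    set g : ℕ → 𝕜 := fun k => coef (n % K) k * G k (x n) with hg
    have hsum' : Summable (fun k => g (k + n)) := (summable_nat_add_iff n).2 hsum
    have hsplit1 : ∑ k ∈ Finset.range n, g k + ∑' k, g (k + n) = ∑' k, g k :=
      Summable.sum_add_tsum_nat_add n hsum
    have hsplit2 : ∑' k, g (k + n) = g n + ∑' k, g (k + (n+1)) := by
      rw [Summable.tsum_eq_zero_add hsum']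
      congr 1
      · exact congrArg g (by omega)
      · exact tsum_congr fun k => congrArg g (by omega)
    have hgn : g n = ((θ^n : ℝ) : 𝕜) * G n (x n) := by
      simp [hg, coef]
    have hhead : ∑ k ∈ Finset.range n, g k = Hs G n := rfl
    have hEq : f (n % K) (x n) =
        (Hs G n + ((θ^n : ℝ) : 𝕜) * G n (x n)) + ∑' k, g (k + (n+1)) := by
      rw [hval, ← hsplit1, hsplit2, hgn, hhead]; ring
    -- tail bound
    set w : ℕ → ℝ := fun k => if K ≤ k + 1 then θ^(k+(n+1)) * ‖x n‖ else 0 with hw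
    have hGx : ∀ m, ‖G m (x n)‖ ≤ ‖x n‖ := fun m =>
      le_trans ((G m).le_opNorm (x n))
        (mul_le_of_le_one_left (norm_nonneg _) (hGspec m).2.1)
    have htail_terms : ∀ k, ‖g (k + (n+1))‖ ≤ w k := by
      intro k
      by_cases hk : K ≤ k + 1
      · rw [hw]; simp only [if_pos hk]
        calc ‖g (k+(n+1))‖ = ‖coef (n % K) (k+(n+1))‖ * ‖G (k+(n+1)) (x n)‖ := norm_mul _ _
          _ ≤ θ^(k+(n+1)) * ‖x n‖ :=
            mul_le_mul (hnormcoef _ _) (hGx _) (norm_nonneg _) (pow_nonneg hθpos.le _)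
      · rw [hw]; simp only [if_neg hk]
        have hne : (k+(n+1)) % K ≠ n % K := by
          intro hmod
          have h1 : n ≤ k + (n+1) := by omega
          have h2 : K ∣ (k + (n+1)) - n := (Nat.modEq_iff_dvd' h1).mp hmod.symm
          have h3 : (k + (n+1)) - n = k + 1 := by omega
          rw [h3] at h2
          exact hk (Nat.le_of_dvd (by omega) h2)
        have hz : coef (n % K) (k+(n+1)) = 0 := by simp [coef, hne]
        simp [hg, hz]
    have hwsummable : Summable w := by
      refine Summable.of_nonneg_of_le (fun k => ?_) (fun k => ?_)
        ((summable_geometric_of_lt_one hθpos.le hθ1).mul_right (θ^(n+1) * ‖x n‖))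
      · rw [hw]; dsimp only; split
        · positivity
        · exact le_rfl
      · rw [hw]; dsimp only; split
        · rw [pow_add]; ring_nf; exact le_rfl
        · positivity
    have hnsummable : Summable (fun k => ‖g (k + (n+1))‖) :=
      Summable.of_nonneg_of_le (fun _ => norm_nonneg _) htail_terms hwsummable
    have hT1 : ‖∑' k, g (k + (n+1))‖ ≤ ∑' k, w k :=
      le_trans (norm_tsum_le_tsum_norm hnsummable) (Summable.tsum_le_tsum htail_terms hnsummable hwsummable)
    have e1 : ∑ k ∈ Finset.range (K-1), w k = 0 :=
      Finset.sum_eq_zero fun k hk => by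
        have := Finset.mem_range.mp hk
        rw [hw]; exact if_neg (by omega)
    have e3 : ∀ k : ℕ, w (k + (K-1)) = θ^k * (θ^(K+n) * ‖x n‖) := by
      intro k
      rw [hw]; dsimp only
      rw [if_pos (by omega), show k + (K-1) + (n+1) = k + (K+n) by omega, pow_add, mul_assoc]
    have e4 : ∑' k, w k = θ^(K+n) * ‖x n‖ * (1-θ)⁻¹ := by
      rw [← Summable.sum_add_tsum_nat_add (K-1) hwsummable, e1, zero_add, tsum_congr e3,
        tsum_mul_right, tsum_geometric_of_lt_one hθpos.le hθ1]
      ring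
    have hT : ‖∑' k, g (k + (n+1))‖ ≤ θ^n * ‖x n‖ * (θ^K * (1-θ)⁻¹) := by
      rw [pow_add] at e4
      calc ‖∑' k, g (k + (n+1))‖ ≤ ∑' k, w k := hT1
        _ = θ^K * θ^n * ‖x n‖ * (1-θ)⁻¹ := by rw [e4]
        _ = θ^n * ‖x n‖ * (θ^K * (1-θ)⁻¹) := by ring
    -- combine
    have hA : θ^n * (‖x n‖ / (2*C)) ≤ ‖Hs G n + ((θ^n : ℝ) : 𝕜) * G n (x n)‖ := by
      refine le_trans ?_ (hGspec n).2.2.1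
      exact mul_le_mul_of_nonneg_left ((hGspec n).2.2.2 hn) (pow_nonneg hθpos.le n)
    have h5 : ‖Hs G n + ((θ^n : ℝ) : 𝕜) * G n (x n)‖ ≤ ‖f (n % K) (x n)‖ +
        ‖∑' k, g (k + (n+1))‖ := by
      rw [hEq]
      calc ‖Hs G n + ((θ^n : ℝ) : 𝕜) * G n (x n)‖
          = ‖((Hs G n + ((θ^n : ℝ) : 𝕜) * G n (x n)) + ∑' k, g (k + (n+1)))
              + (-(∑' k, g (k + (n+1))))‖ := congrArg norm (add_neg_cancel_right _ _).symm
        _ ≤ ‖(Hs G n + ((θ^n : ℝ) : 𝕜) * G n (x n)) + ∑' k, g (k + (n+1))‖ +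
            ‖-(∑' k, g (k + (n+1)))‖ := norm_add_le _ _
        _ = _ := by rw [norm_neg]
    -- numeric conclusion
    have hq : θ^K * (1-θ)⁻¹ ≤ 1/(4*C) := by
      have h1θ : (0:ℝ) < 1 - θ := by linarith
      have h4C : (0:ℝ) < 4*C := by positivity
      have hk' : θ^K * (4*C) < 1-θ := (lt_div_iff₀ h4C).mp hK
      rw [← div_eq_mul_inv, div_le_div_iff₀ h1θ h4C]
      linarith
    have hPN : θ * c ≤ θ^n * ‖x n‖ := by
      have h6 : (θ*c)^n ≤ θ^n * ‖x n‖ := by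
        rw [mul_pow]
        exact mul_le_mul_of_nonneg_left (hx n hn) (pow_nonneg hθpos.le n)
      exact le_trans (le_self_pow₀ hθc.le (by omega)) h6
    have h7 : θ^n * ‖x n‖ * (θ^K * (1-θ)⁻¹) ≤ θ^n * ‖x n‖ * (1/(4*C)) :=
      mul_le_mul_of_nonneg_left hq (by positivity)
    have h8 : θ * c / (4*C) ≤ θ^n * ‖x n‖ / (4*C) := by gcongr
    have h9 : θ^n * (‖x n‖ / (2*C)) = θ^n * ‖x n‖ / (2*C) := by ring
    have h10 : θ^n * ‖x n‖ / (2*C) - θ^n * ‖x n‖ * (1/(4*C)) = θ^n * ‖x n‖ / (4*C) := by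
      field_simp; ring
    linarith
  -- topology conclusion
  intro hmem
  set Φ : X → (Y → 𝕜) := fun v F => (F : X →L[𝕜] 𝕜) v with hΦ
  set ε : ℝ := θ * c / (4*C) with hε
  have hεpos : 0 < ε := by positivity
  let Fj : ℕ → Y := fun j => ⟨f j, hfY j⟩
  set V : Set (Y → 𝕜) := ⋂ j ∈ Finset.range K, (fun u : Y → 𝕜 => u (Fj j)) ⁻¹' Metric.ball 0 ε
    with hV
  have hVopen : IsOpen V :=
    isOpen_biInter_finset fun j _ => Metric.isOpen_ball.preimage (continuous_apply (Fj j))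
  have hUopen : @IsOpen X (TopologicalSpace.induced
      (fun (v : X) (f : Y) => (f : X →L[𝕜] 𝕜) v) Pi.topologicalSpace) (Φ ⁻¹' V) :=
    isOpen_induced hVopen
  have h0U : (0 : X) ∈ Φ ⁻¹' V := by
    simp only [hV, Set.mem_preimage, Set.mem_iInter, Set.mem_preimage]
    intro j _
    simp only [hΦ, map_zero]
    simpa using hεpos
  refine absurd hmem (not_mem_closure_of_sep _ _ (Φ ⁻¹' V) 0 hUopen h0U ?_)
  rintro y ⟨m, hm, rfl⟩ hyU
  have hj : m % K ∈ Finset.range K := Finset.mem_range.mpr (Nat.mod_lt _ hKpos)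
  have hb := Set.mem_iInter₂.mp hyU (m % K) hj
  simp only [Set.mem_preimage, mem_ball_zero_iff] at hb
  exact absurd hb (not_lt.mpr (hmain m hm))
end

section
/- Let E be a Banach space, let c > 1, and let (x_n)_{n≥1} be a sequence in the dual space E* with ‖x_n‖ ≥ c^n for all n ≥ 1. Then 0 does not belong to the weak-star closure of the set {x_n : n ≥ 1} in E*. -/
open NormedSpace

private lemma align_aux {𝕜 : Type*} [RCLike 𝕜] (a b : 𝕜) :
    ∃ σ : 𝕜, ‖σ‖ = 1 ∧ ‖a + σ * b‖ = ‖a‖ + ‖b‖ := by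
  rcases eq_or_ne a 0 with ha | ha
  · exact ⟨1, norm_one, by simp [ha]⟩
  rcases eq_or_ne b 0 with hb | hb
  · exact ⟨1, norm_one, by simp [hb]⟩
  have ha0 : ‖a‖ ≠ 0 := norm_ne_zero_iff.mpr ha
  have hb0 : ‖b‖ ≠ 0 := norm_ne_zero_iff.mpr hb
  have ha' : (‖a‖ : 𝕜) ≠ 0 := by simpa using ha0
  refine ⟨(a * (‖b‖ : 𝕜)) / ((‖a‖ : 𝕜) * b), ?_, ?_⟩
  · rw [norm_div, norm_mul, norm_mul, RCLike.norm_ofReal, RCLike.norm_ofReal,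
      abs_of_nonneg (norm_nonneg a), abs_of_nonneg (norm_nonneg b)]
    exact div_self (by rw [mul_comm ‖a‖ ‖b‖]; exact mul_ne_zero hb0 ha0)
  · have h1 : (a * (‖b‖ : 𝕜)) / ((‖a‖ : 𝕜) * b) * b = a * (‖b‖ : 𝕜) / (‖a‖ : 𝕜) := by
      field_simp
    rw [h1]
    have h2 : a + a * (‖b‖ : 𝕜) / (‖a‖ : 𝕜) = a * (((‖a‖ : 𝕜) + (‖b‖ : 𝕜)) / (‖a‖ : 𝕜)) := by
      field_simp
    rw [h2, norm_mul, norm_div]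
    rw [← RCLike.ofReal_add, RCLike.norm_ofReal, RCLike.norm_ofReal,
      abs_of_nonneg (by positivity : (0:ℝ) ≤ ‖a‖ + ‖b‖), abs_of_nonneg (norm_nonneg a)]
    rw [mul_div_assoc', mul_comm, mul_div_assoc]
    rw [div_self ha0, mul_one]

private lemma step_aux {𝕜 : Type*} [RCLike 𝕜] {E : Type*} [NormedAddCommGroup E]
    [NormedSpace 𝕜 E] (f : StrongDual 𝕜 E) (hf : 0 < ‖f‖) (z : E) {ρ : ℝ} (hρ : 0 < ρ) :
    ∃ u : E, ‖u‖ ≤ ρ ∧ ‖f z‖ + 2/3 * (‖f‖ * ρ) ≤ ‖f (z + u)‖ := by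
  obtain ⟨v, hv1, hv2⟩ := f.exists_lt_apply_of_lt_opNorm
    (show 2/3 * ‖f‖ < ‖f‖ by nlinarith)
  obtain ⟨σ, hσ, hab⟩ := align_aux (f z) ((ρ : 𝕜) * f v)
  refine ⟨σ • ((ρ : 𝕜) • v), ?_, ?_⟩
  · rw [norm_smul, norm_smul, hσ, one_mul, RCLike.norm_ofReal, abs_of_pos hρ]
    nlinarith [norm_nonneg v]
  · have : f (z + σ • ((ρ : 𝕜) • v)) = f z + σ * ((ρ : 𝕜) * f v) := by
      rw [map_add, map_smul, map_smul, smul_eq_mul, smul_eq_mul]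
    rw [this, hab, norm_mul, RCLike.norm_ofReal, abs_of_pos hρ]
    nlinarith

private lemma glide_aux {𝕜 : Type*} [RCLike 𝕜] {E : Type*} [NormedAddCommGroup E]
    [NormedSpace 𝕜 E] [CompleteSpace E] {d : ℝ} (hd : 16 ≤ d) (g : ℕ → StrongDual 𝕜 E)
    (hg : ∀ k, d ^ k ≤ ‖g k‖) : ∃ e : E, ∀ k, 1 ≤ ‖g k e‖ := by
  have hd1 : (1:ℝ) < d := by linarith
  have hd0 : (0:ℝ) < d := by linarith
  set r : ℝ := d⁻¹ with hr_def
  have hr0 : 0 < r := inv_pos.mpr hd0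
  have hr16 : r ≤ 1/16 := by
    rw [hr_def, inv_le_comm₀ (by linarith) (by norm_num)]; linarith
  have hr1 : r < 1 := by linarith
  have hdr : d * r = 1 := mul_inv_cancel₀ (ne_of_gt hd0)
  have hgpos : ∀ k, 0 < ‖g k‖ := fun k => lt_of_lt_of_le (pow_pos hd0 k) (hg k)
  have hρpos : ∀ k : ℕ, (0:ℝ) < 9 * r ^ k := fun k => by positivity
  have hF : ∀ (k : ℕ) (w : E), ∃ u : E,
      ‖u‖ ≤ 9 * r ^ k ∧ ‖g k w‖ + 2/3 * (‖g k‖ * (9 * r ^ k)) ≤ ‖g k (w + u)‖ :=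
    fun k w => step_aux (g k) (hgpos k) w (hρpos k)
  choose F hF1 hF2 using hF
  set z : ℕ → E := fun n => Nat.rec (F 0 0) (fun n zn => zn + F (n+1) zn) n with hz_def
  have z0 : z 0 = F 0 0 := rfl
  have zs : ∀ n, z (n+1) = z n + F (n+1) (z n) := fun n => rfl
  -- lower bound at step n
  have hA : ∀ n, 2/3 * (‖g n‖ * (9 * r ^ n)) ≤ ‖g n (z n)‖ := by
    intro n
    cases n with
    | zero =>
      have := hF2 0 0
      rw [map_zero, norm_zero, zero_add] at this
      rw [z0]
      have h00 : (0:E) + F 0 0 = F 0 0 := zero_add _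
      rwa [h00] at this
    | succ n =>
      have := hF2 (n+1) (z n)
      rw [← zs n] at this
      exact le_trans (le_add_of_nonneg_left (norm_nonneg _)) this
  -- Cauchy
  have hB : ∀ n, dist (z n) (z (n+1)) ≤ (9 * r) * r ^ n := by
    intro n
    rw [zs n, dist_eq_norm]
    have : z n - (z n + F (n+1) (z n)) = -(F (n+1) (z n)) := by abel
    rw [this, norm_neg]
    calc ‖F (n+1) (z n)‖ ≤ 9 * r ^ (n+1) := hF1 (n+1) (z n)
      _ = 9 * r * r ^ n := by ring
  have hcauchy : CauchySeq z := cauchySeq_of_le_geometric r (9*r) hr1 hB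
  obtain ⟨e, he⟩ := cauchySeq_tendsto_of_complete hcauchy
  have hdist : ∀ n, dist (z n) e ≤ (9*r) * r ^ n / (1 - r) :=
    dist_le_of_le_geometric_of_tendsto r (9*r) hr1 hB he
  refine ⟨e, fun k => ?_⟩
  have f3 : ‖g k (z k)‖ ≤ ‖g k e‖ + ‖g k‖ * dist (z k) e := by
    have : g k (z k) = g k e + g k (z k - e) := by rw [map_sub]; abel
    rw [this]
    calc ‖g k e + g k (z k - e)‖ ≤ ‖g k e‖ + ‖g k (z k - e)‖ := norm_add_le _ _
      _ ≤ ‖g k e‖ + ‖g k‖ * ‖z k - e‖ := by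
          have := (g k).le_opNorm (z k - e); linarith
      _ = ‖g k e‖ + ‖g k‖ * dist (z k) e := by rw [dist_eq_norm]
  have hrk : (0:ℝ) < r ^ k := pow_pos hr0 k
  have e2 : (9*r) * r ^ k / (1 - r) ≤ 1 * r ^ k := by
    rw [div_le_iff₀ (by linarith)]
    nlinarith
  have e1 : ‖g k‖ * dist (z k) e ≤ ‖g k‖ * (1 * r ^ k) :=
    mul_le_mul_of_nonneg_left (le_trans (hdist k) e2) (norm_nonneg _)
  have f1 := hA k
  have f5 : 1 ≤ ‖g k‖ * r ^ k := by
    calc (1:ℝ) = d ^ k * r ^ k := by rw [← mul_pow, hdr, one_pow]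
      _ ≤ ‖g k‖ * r ^ k := mul_le_mul_of_nonneg_right (hg k) (le_of_lt hrk)
  nlinarith [hgpos k]

/-- Let `E` be a Banach space over `𝕜 = ℝ` or `ℂ`, let `c > 1`, and let `(x_n)_{n ≥ 1}` be a
sequence in the dual `E*` with `‖x n‖ ≥ c ^ n` for all `n ≥ 1`. Then `0` is not in the
weak-star closure of `{x_n : n ≥ 1}`. -/
theorem stmt_4 {𝕜 : Type*} [RCLike 𝕜] {E : Type*} [NormedAddCommGroup E]
    [NormedSpace 𝕜 E] [CompleteSpace E] {c : ℝ} (hc : 1 < c) (x : ℕ → StrongDual 𝕜 E)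
    (hx : ∀ n : ℕ, 1 ≤ n → c ^ n ≤ ‖x n‖) :
    (0 : WeakDual 𝕜 E) ∉
      closure {y : WeakDual 𝕜 E | ∃ n : ℕ, 1 ≤ n ∧ y = StrongDual.toWeakDual (x n)} := by
  have hc0 : (0:ℝ) < c := by linarith
  obtain ⟨m, hm⟩ := pow_unbounded_of_one_lt (16:ℝ) hc
  have hm0 : 0 < m := by
    rcases Nat.eq_zero_or_pos m with h | h
    · rw [h, pow_zero] at hm; norm_num at hm
    · exact h
  have key : ∀ r : ℕ, ∃ e : E, ∀ k : ℕ, 1 ≤ ‖x (r + 1 + k * m) (e)‖ := by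
    intro r
    apply glide_aux (le_of_lt hm) (fun k => x (r + 1 + k * m))
    intro k
    calc (c ^ m) ^ k = c ^ (k * m) := by rw [← pow_mul, mul_comm]
      _ ≤ c ^ (r + 1 + k * m) := by
          apply pow_le_pow_right₀ (le_of_lt hc); omega
      _ ≤ ‖x (r + 1 + k * m)‖ := hx _ (by omega)
  choose e he using key
  intro h0
  rw [mem_closure_iff] at h0
  obtain ⟨y, hyU, n, hn1, hyx⟩ := h0 (⋂ r ∈ Finset.range m, {y : WeakDual 𝕜 E | ‖y (e r)‖ < 1})
    (isOpen_biInter_finset fun r _ =>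
      isOpen_lt (Continuous.norm (WeakDual.eval_continuous (e r))) continuous_const)
    (by
      simp only [Set.mem_iInter]
      intro i _
      have h0' : (0 : WeakDual 𝕜 E) (e i) = 0 := rfl
      simp [Set.mem_setOf_eq, h0'])
  set r := (n - 1) % m with hr_def
  set k := (n - 1) / m with hk_def
  have hrm : r < m := Nat.mod_lt _ hm0
  have hmd : r + m * k = n - 1 := Nat.mod_add_div (n - 1) m
  have hn : r + 1 + k * m = n := by rw [mul_comm]; omega
  have h1 : 1 ≤ ‖x n (e r)‖ := by rw [← hn]; exact he r k
  have h2 : ‖y (e r)‖ < 1 := by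
    simp only [Set.mem_iInter] at hyU
    exact hyU r (Finset.mem_range.mpr hrm)
  rw [hyx] at h2
  have : (StrongDual.toWeakDual (x n)) (e r) = x n (e r) := rfl
  rw [this] at h2
  linarith
end

section
/- Let X be a nonzero complex Banach space and let T be a weakly hypercyclic bounded linear operator on X. Then the spectrum σ(T) contains a point z with |z| = 1. -/
set_option maxHeartbeats 1000000

open MeasureTheory Metric Set Filter Topology

namespace DTaux

set_option linter.unusedSectionVars false



lemma exists_good_t (m : ℕ) (c : Fin m → Fin m → ℂ) (w a : Fin m → ℝ)
    (ha : ∀ n, 0 < a n) (hdiag : ∀ n, c n n = (a n : ℂ))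
    (hw : ∀ n, 0 ≤ w n) (hsum : ∑ n, w n / a n < 1) :
    ∃ t : Fin m → ℝ, (∀ k, |t k| ≤ 1) ∧
      ∀ n, w n ≤ ‖∑ k, (t k : ℂ) * c n k‖ := by
  classical
  rcases m with - | m'
  · exact ⟨fun _ => 0, fun k => k.elim0, fun n => n.elim0⟩
  set μ₀ : Measure ℝ := (2⁻¹ : ENNReal) • volume.restrict (Icc (-1:ℝ) 1) with hμ₀
  have hμ₀prob : IsProbabilityMeasure μ₀ := by
    constructor
    rw [hμ₀]
    simp [Measure.restrict_apply, Real.volume_Icc]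
    rw [show ((1:ℝ) + 1) = 2 by norm_num, ENNReal.ofReal_ofNat,
      ENNReal.inv_mul_cancel (by norm_num) (by norm_num)]
  set μ : Measure (Fin (m' + 1) → ℝ) := Measure.pi fun _ => μ₀ with hμ
  have hμprob : IsProbabilityMeasure μ := by infer_instance
  set Bad : Fin (m' + 1) → Set (Fin (m' + 1) → ℝ) :=
    fun n => {t | ‖∑ k, (t k : ℂ) * c n k‖ < w n} with hBad
  have hBadOpen : ∀ n, IsOpen (Bad n) := by
    intro n
    have hc : Continuous fun t : Fin (m' + 1) → ℝ =>
        ‖∑ k, (t k : ℂ) * c n k‖ :=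
      continuous_norm.comp (by fun_prop)
    exact isOpen_lt hc continuous_const
  have key : ∀ n, μ (Bad n) ≤ ENNReal.ofReal (w n / a n) := by
    intro n
    set ν : Measure (Fin m' → ℝ) := Measure.pi fun _ => μ₀ with hν
    have hνprob : IsProbabilityMeasure ν := by infer_instance
    set e := MeasurableEquiv.piFinSuccAbove (fun _ : Fin (m' + 1) => ℝ) n with he
    have hmp := measurePreserving_piFinSuccAbove (fun _ : Fin (m' + 1) => μ₀) n
    set S : Set (ℝ × (Fin m' → ℝ)) :=
      {p | ‖(p.1 : ℂ) * c n n + ∑ k, (p.2 k : ℂ) * c n (n.succAbove k)‖ < w n}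
      with hS
    have hSopen : IsOpen S := by
      have hc : Continuous fun p : ℝ × (Fin m' → ℝ) =>
          ‖(p.1 : ℂ) * c n n + ∑ k, (p.2 k : ℂ) * c n (n.succAbove k)‖ :=
        continuous_norm.comp (by fun_prop)
      exact isOpen_lt hc continuous_const
    have hpre : Bad n = e ⁻¹' S := by
      ext t
      have hsum' : (∑ k, (t k : ℂ) * c n k)
          = (t n : ℂ) * c n n + ∑ k, (t (n.succAbove k) : ℂ) * c n (n.succAbove k) :=
        Fin.sum_univ_succAbove (fun k => (t k : ℂ) * c n k) n
      simp only [hBad, mem_setOf_eq, mem_preimage, he,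
        MeasurableEquiv.piFinSuccAbove_apply]
      rw [hsum']
      rfl
    have hinner : ∀ r : Fin m' → ℝ,
        μ₀ ((fun s => (s, r)) ⁻¹' S) ≤ ENNReal.ofReal (w n / a n) := by
      intro r
      set q : ℝ := (∑ k, (r k : ℂ) * c n (n.succAbove k)).re with hq
      have hsub : ((fun s => (s, r)) ⁻¹' S) ⊆ Ioo ((-q - w n) / a n) ((-q + w n) / a n) := by
        intro s hs
        simp only [hS, mem_preimage, mem_setOf_eq] at hs
        have hre : |((s : ℂ) * c n n + ∑ k, (r k : ℂ) * c n (n.succAbove k)).re| < w n :=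
          lt_of_le_of_lt (Complex.abs_re_le_norm _) hs
        rw [Complex.add_re, hdiag n] at hre
        have : ((s : ℂ) * (a n : ℂ)).re = s * a n := by
          rw [← Complex.ofReal_mul, Complex.ofReal_re]
        rw [this, ← hq, abs_lt] at hre
        constructor
        · rw [div_lt_iff₀ (ha n)]  -- (-q - w n)/a n < s  ↔ -q - w n < s * a n
          linarith [hre.1]
        · rw [lt_div_iff₀ (ha n)]
          linarith [hre.2]
      calc μ₀ ((fun s => (s, r)) ⁻¹' S) ≤ μ₀ (Ioo ((-q - w n) / a n) ((-q + w n) / a n)) :=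
            measure_mono hsub
        _ ≤ 2⁻¹ * volume (Ioo ((-q - w n) / a n) ((-q + w n) / a n)) := by
            rw [hμ₀]
            simp only [Measure.smul_apply, smul_eq_mul]
            exact mul_le_mul_right (Measure.restrict_le_self _) _
        _ ≤ ENNReal.ofReal (w n / a n) := by
            rw [Real.volume_Ioo]
            have harith : (-q + w n) / a n - (-q - w n) / a n = 2 * (w n / a n) := by
              field_simp
              ring
            rw [harith, ENNReal.ofReal_mul (by norm_num)]
            rw [← mul_assoc]
            rw [show ENNReal.ofReal (2:ℝ) = (2:ENNReal) by simp [ENNReal.ofReal_ofNat]]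
            rw [ENNReal.inv_mul_cancel (by norm_num) (by norm_num), one_mul]
    calc μ (Bad n) = (μ₀.prod ν) S := by
          rw [hpre, hμ]
          exact hmp.measure_preimage hSopen.measurableSet.nullMeasurableSet
      _ = ∫⁻ r, μ₀ ((fun s => (s, r)) ⁻¹' S) ∂ν :=
          Measure.prod_apply_symm hSopen.measurableSet
      _ ≤ ∫⁻ _, ENNReal.ofReal (w n / a n) ∂ν := lintegral_mono hinner
      _ = ENNReal.ofReal (w n / a n) := by simp
  -- now the union bound
  set Box : Set (Fin (m' + 1) → ℝ) := Set.pi univ fun _ => Icc (-1:ℝ) 1 with hBox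
  have hBoxone : μ Box = 1 := by
    rw [hμ, hBox, Measure.pi_pi]
    have : μ₀ (Icc (-1:ℝ) 1) = 1 := by
      rw [hμ₀]
      simp [Measure.restrict_apply, Real.volume_Icc]
      rw [show ((1:ℝ) + 1) = 2 by norm_num, ENNReal.ofReal_ofNat,
        ENNReal.inv_mul_cancel (by norm_num) (by norm_num)]
    simp [this]
  have hUnion : μ (⋃ n, Bad n) < 1 := by
    calc μ (⋃ n, Bad n) ≤ ∑' n, μ (Bad n) := measure_iUnion_le _
      _ = ∑ n, μ (Bad n) := tsum_fintype _
      _ ≤ ∑ n, ENNReal.ofReal (w n / a n) := Finset.sum_le_sum fun n _ => key n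
      _ = ENNReal.ofReal (∑ n, w n / a n) := by
          rw [ENNReal.ofReal_sum_of_nonneg]
          intro n _
          exact div_nonneg (hw n) (ha n).le
      _ < 1 := by
          rw [show (1:ENNReal) = ENNReal.ofReal 1 by simp]
          exact (ENNReal.ofReal_lt_ofReal_iff_of_nonneg
            (Finset.sum_nonneg fun n _ => div_nonneg (hw n) (ha n).le)).mpr hsum
  have hne : (Box \ ⋃ n, Bad n).Nonempty := by
    by_contra hemp
    rw [not_nonempty_iff_eq_empty, diff_eq_empty] at hemp
    have := measure_mono (μ := μ) hemp
    rw [hBoxone] at this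
    exact absurd (lt_of_le_of_lt this hUnion) (lt_irrefl _)
  obtain ⟨t, htBox, htBad⟩ := hne
  refine ⟨t, ?_, ?_⟩
  · intro k
    have := htBox k (mem_univ k)
    rw [abs_le]
    exact ⟨this.1, this.2⟩
  · intro n
    have : t ∉ Bad n := fun h => htBad (mem_iUnion.mpr ⟨n, h⟩)
    simpa [hBad, not_lt] using this



variable {X : Type*} [NormedAddCommGroup X] [NormedSpace ℂ X]

lemma dense_hits {v : ℕ → X}
    (hT : Dense (Set.range fun n : ℕ => toWeakSpace ℂ X (v n)))
    {ι : Type*} (s : Finset ι) (f : ι → X →L[ℂ] ℂ) (cc : ι → ℂ) (ε : ι → ℝ) (p : X)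
    (hp : ∀ i ∈ s, ‖f i p - cc i‖ < ε i) :
    ∃ n, ∀ i ∈ s, ‖f i (v n) - cc i‖ < ε i := by
  classical
  set U : Set (WeakSpace ℂ X) :=
    ⋂ i ∈ s, {z : WeakSpace ℂ X |
      ‖(topDualPairing ℂ X).flip z (f i) - cc i‖ < ε i} with hU
  have hUopen : IsOpen U := by
    refine isOpen_biInter_finset fun i _ => ?_
    have hcont : Continuous fun z : WeakSpace ℂ X =>
        (topDualPairing ℂ X).flip z (f i) :=
      WeakBilin.eval_continuous _ (f i)
    have : Continuous fun z : WeakSpace ℂ X =>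
        ‖(topDualPairing ℂ X).flip z (f i) - cc i‖ :=
      (hcont.sub continuous_const).norm
    exact isOpen_lt this continuous_const
  have hmem : toWeakSpace ℂ X p ∈ U := by
    rw [hU]
    refine mem_iInter₂.mpr fun i hi => ?_
    exact hp i hi
  obtain ⟨y, hyr, hyU⟩ := hT.exists_mem_open hUopen ⟨_, hmem⟩
  obtain ⟨n, rfl⟩ := hyr
  refine ⟨n, fun i hi => ?_⟩
  rw [hU] at hyU
  exact mem_iInter₂.mp hyU i hi



section Coeff

variable {A : Type*} [NormedRing A] [NormedAlgebra ℂ A] [CompleteSpace A]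

noncomputable def coeffA (T : A) (n : ℤ) : A :=
  (2 * Real.pi * Complex.I : ℂ)⁻¹ • ∮ z in C(0, 1), z ^ (-n - 1) • resolvent T z

variable {T : A} {ra rb : ℝ}
variable (h0 : 0 < ra) (ha1 : ra ≤ 1) (h1b : 1 ≤ rb)
variable (hres : ∀ z : ℂ, ra ≤ ‖z‖ → ‖z‖ ≤ rb → IsUnit (algebraMap ℂ A z - T))

omit [CompleteSpace A] in
lemma T_mul_resolvent {z : ℂ} (h : IsUnit (algebraMap ℂ A z - T)) :
    T * resolvent T z = z • resolvent T z - 1 := by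
  have h1 : (algebraMap ℂ A z - T) * resolvent T z = 1 := by
    rw [resolvent]
    exact Ring.mul_inverse_cancel _ h
  rw [sub_mul] at h1
  have h2 : algebraMap ℂ A z * resolvent T z = z • resolvent T z := by
    rw [Algebra.algebraMap_eq_smul_one, smul_mul_assoc, one_mul]
  rw [h2] at h1
  have := sub_eq_iff_eq_add.mp h1
  rw [this]
  abel

omit [CompleteSpace A] in
lemma resolvent_comm {z : ℂ} (h : IsUnit (algebraMap ℂ A z - T)) :
    resolvent T z * T = T * resolvent T z := by
  have hc0 : Commute T (algebraMap ℂ A z) := (Algebra.commutes z T).symm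
  have hc : Commute T (algebraMap ℂ A z - T) := hc0.sub_right (Commute.refl T)
  have hu : (h.unit : A) = algebraMap ℂ A z - T := h.unit_spec
  have hc2 : Commute T (h.unit : A) := by rw [hu]; exact hc
  have hc3 := hc2.units_inv_right
  have h1 : (algebraMap ℂ A z - T) * resolvent T z = 1 := by
    rw [resolvent]
    exact Ring.mul_inverse_cancel _ h
  have hR : ((h.unit⁻¹ : Aˣ) : A) = resolvent T z :=
    Units.inv_eq_of_mul_eq_one_right (by rw [hu]; exact h1)
  rw [← hR]
  exact hc3.symm

include h0 ha1 h1b hres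

lemma mem_res {z : ℂ} (hz1 : ra ≤ ‖z‖) (hz2 : ‖z‖ ≤ rb) : z ∈ resolventSet ℂ T :=
  hres z hz1 hz2

lemma diffF (m : ℤ) {z : ℂ} (hz1 : ra ≤ ‖z‖) (hz2 : ‖z‖ ≤ rb) :
    DifferentiableAt ℂ (fun w => w ^ m • resolvent T w) z := by
  have hz0 : z ≠ 0 := by
    intro h
    rw [h, norm_zero] at hz1
    exact absurd (lt_of_lt_of_le h0 hz1) (lt_irrefl _)
  exact (differentiableAt_zpow.mpr (Or.inl hz0)).smul
    (spectrum.hasDerivAt_resolvent (mem_res h0 ha1 h1b hres hz1 hz2)).differentiableAt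

lemma eqRadius (m : ℤ) {r R : ℝ} (hr : ra ≤ r) (hrR : r ≤ R) (hR : R ≤ rb) :
    (∮ z in C(0, R), z ^ m • resolvent T z) = ∮ z in C(0, r), z ^ m • resolvent T z := by
  refine Complex.circleIntegral_eq_of_differentiable_on_annulus_off_countable
    (lt_of_lt_of_le h0 hr) hrR Set.countable_empty ?_ ?_
  · intro z hz
    rcases hz with ⟨hz1, hz2⟩
    rw [mem_closedBall_zero_iff] at hz1
    rw [mem_ball_zero_iff, not_lt] at hz2
    exact ((diffF h0 ha1 h1b hres m (le_trans hr hz2)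
      (le_trans hz1 hR)).continuousAt).continuousWithinAt
  · intro z hz
    rcases hz.1 with ⟨hz1, hz2⟩
    rw [mem_ball_zero_iff] at hz1
    rw [mem_closedBall_zero_iff, not_le] at hz2
    exact diffF h0 ha1 h1b hres m (le_trans hr hz2.le) (le_trans hz1.le hR)

lemma coeffA_eq (n : ℤ) {r : ℝ} (hr : ra ≤ r) (hR : r ≤ rb) :
    coeffA T n = (2 * Real.pi * Complex.I : ℂ)⁻¹ •
      ∮ z in C(0, r), z ^ (-n - 1) • resolvent T z := by
  rcases le_total r 1 with h | h
  · rw [coeffA, eqRadius h0 ha1 h1b hres (-n-1) hr h h1b]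
  · rw [coeffA, ← eqRadius h0 ha1 h1b hres (-n-1) ha1 h hR]

lemma exists_boundA :
    ∃ M : ℝ, 0 < M ∧ (∀ k : ℕ, ‖coeffA T (-1 - k)‖ ≤ M * ra ^ k) ∧
      (∀ k : ℕ, ‖coeffA T (k : ℤ)‖ * rb ^ k ≤ M) := by
  have hsphere : ∀ r : ℝ, 0 < r → r ≤ rb → ra ≤ r →
      ∃ C : ℝ, 0 < C ∧ ∀ z ∈ sphere (0:ℂ) r, ‖resolvent T z‖ ≤ C := by
    intro r hrpos hrb hra
    have hcont : ContinuousOn (resolvent T) (sphere (0:ℂ) r) := by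
      intro z hz
      rw [mem_sphere_zero_iff_norm] at hz
      exact ((spectrum.hasDerivAt_resolvent (mem_res h0 ha1 h1b hres (hz ▸ hra)
        (hz ▸ hrb))).differentiableAt.continuousAt).continuousWithinAt
    obtain ⟨C, hC⟩ := (isCompact_sphere (0:ℂ) r).exists_bound_of_continuousOn hcont
    exact ⟨max C 1, lt_of_lt_of_le one_pos (le_max_right _ _),
      fun z hz => le_trans (hC z hz) (le_max_left _ _)⟩
  obtain ⟨Ca, hCa0, hCa⟩ := hsphere ra h0 (le_trans ha1 h1b) le_rfl
  obtain ⟨Cb, hCb0, hCb⟩ := hsphere rb (lt_of_lt_of_le one_pos h1b) le_rfl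
    (le_trans ha1 h1b)
  have hπ : ‖(2 * Real.pi * Complex.I : ℂ)⁻¹‖ = (2 * Real.pi)⁻¹ := by
    rw [norm_inv, norm_mul, norm_mul, Complex.norm_I, mul_one, Complex.norm_ofNat,
      Complex.norm_real, Real.norm_eq_abs, abs_of_pos Real.pi_pos]
  refine ⟨Ca + Cb, by linarith, fun k => ?_, fun k => ?_⟩
  · rw [coeffA_eq h0 ha1 h1b hres _ le_rfl (le_trans ha1 h1b), norm_smul, hπ]
    have hbound : ∀ z ∈ sphere (0:ℂ) ra,
        ‖z ^ (-(-1 - (k:ℤ)) - 1) • resolvent T z‖ ≤ ra ^ k * Ca := by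
      intro z hz
      rw [mem_sphere_zero_iff_norm] at hz
      rw [norm_smul, norm_zpow, hz]
      have hexp : (-(-1 - (k:ℤ)) - 1) = (k : ℤ) := by ring
      rw [hexp, zpow_natCast]
      exact mul_le_mul_of_nonneg_left (hCa z (by rwa [mem_sphere_zero_iff_norm]))
        (pow_nonneg h0.le k)
    have := circleIntegral.norm_integral_le_of_norm_le_const h0.le hbound
    calc (2 * Real.pi)⁻¹ * ‖∮ z in C(0, ra), z ^ (-(-1 - (k:ℤ)) - 1) • resolvent T z‖
        ≤ (2 * Real.pi)⁻¹ * (2 * Real.pi * ra * (ra ^ k * Ca)) := by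
          exact mul_le_mul_of_nonneg_left this (by positivity)
      _ = ra ^ (k + 1) * Ca := by
          field_simp
          ring
      _ ≤ (Ca + Cb) * ra ^ k := by
          have h1 : ra ^ (k+1) ≤ ra ^ k := pow_le_pow_of_le_one h0.le ha1 (by omega)
          have h2 : ra ^ (k+1) * Ca ≤ ra ^ k * Ca :=
            mul_le_mul_of_nonneg_right h1 hCa0.le
          nlinarith [pow_nonneg h0.le k]
  · rw [coeffA_eq h0 ha1 h1b hres _ (le_trans ha1 h1b) le_rfl, norm_smul, hπ]
    have hrbpos : (0:ℝ) < rb := lt_of_lt_of_le one_pos h1b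
    have hbound : ∀ z ∈ sphere (0:ℂ) rb,
        ‖z ^ (-(k:ℤ) - 1) • resolvent T z‖ ≤ (rb ^ (k+1))⁻¹ * Cb := by
      intro z hz
      rw [mem_sphere_zero_iff_norm] at hz
      rw [norm_smul, norm_zpow, hz]
      have hexp : rb ^ (-(k:ℤ) - 1) = (rb ^ (k+1))⁻¹ := by
        rw [show (-(k:ℤ) - 1) = -((k:ℤ) + 1) by ring, zpow_neg, ← zpow_natCast]
        push_cast
        ring_nf
      rw [hexp]
      exact mul_le_mul_of_nonneg_left (hCb z (by rwa [mem_sphere_zero_iff_norm]))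
        (by positivity)
    have := circleIntegral.norm_integral_le_of_norm_le_const hrbpos.le hbound
    calc ((2 * Real.pi)⁻¹ * ‖∮ z in C(0, rb), z ^ (-(k:ℤ) - 1) • resolvent T z‖) * rb ^ k
        ≤ ((2 * Real.pi)⁻¹ * (2 * Real.pi * rb * ((rb ^ (k+1))⁻¹ * Cb))) * rb ^ k := by
          refine mul_le_mul_of_nonneg_right (mul_le_mul_of_nonneg_left this (by positivity))
            (by positivity)
      _ = Cb := by
          have : rb ^ (k+1) = rb ^ k * rb := by ring
          field_simp
          ring
      _ ≤ Ca + Cb := by linarith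



lemma circle_mem_res (θ : ℝ) : IsUnit (algebraMap ℂ A (circleMap 0 1 θ) - T) := by
  have habs : ‖circleMap 0 1 θ‖ = 1 := by
    have := norm_circleMap_zero 1 θ
    simpa using this
  exact hres _ (by rw [habs]; exact ha1) (by rw [habs]; exact h1b)

lemma contIntegrand (m : ℤ) : Continuous fun θ : ℝ =>
    deriv (circleMap 0 1) θ • ((circleMap 0 1 θ) ^ m • resolvent T (circleMap 0 1 θ)) := by
  have h1 : Continuous fun θ : ℝ => circleMap 0 1 θ := continuous_circleMap 0 1
  have hne : ∀ θ : ℝ, circleMap 0 1 θ ≠ 0 := fun θ => circleMap_ne_center one_ne_zero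
  have h2 : Continuous fun θ : ℝ => (circleMap 0 1 θ) ^ m :=
    h1.zpow₀ m fun θ => Or.inl (hne θ)
  have h3 : Continuous fun θ : ℝ => resolvent T (circleMap 0 1 θ) := by
    rw [continuous_iff_continuousAt]
    intro θ
    exact ((spectrum.hasDerivAt_resolvent
      (circle_mem_res h0 ha1 h1b hres θ)).differentiableAt.continuousAt).comp h1.continuousAt
  have h4 : Continuous fun θ : ℝ => deriv (circleMap 0 1) θ := by
    simp only [deriv_circleMap]
    exact h1.mul continuous_const
  exact h4.smul (h2.smul h3)

lemma contIntegrand' (m : ℤ) : Continuous fun θ : ℝ =>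
    deriv (circleMap 0 1) θ • ((circleMap 0 1 θ) ^ m • (1:A)) := by
  have h1 : Continuous fun θ : ℝ => circleMap 0 1 θ := continuous_circleMap 0 1
  have hne : ∀ θ : ℝ, circleMap 0 1 θ ≠ 0 := fun θ => circleMap_ne_center one_ne_zero
  have h2 : Continuous fun θ : ℝ => (circleMap 0 1 θ) ^ m :=
    h1.zpow₀ m fun θ => Or.inl (hne θ)
  have h4 : Continuous fun θ : ℝ => deriv (circleMap 0 1) θ := by
    simp only [deriv_circleMap]
    exact h1.mul continuous_const
  exact h4.smul (h2.smul continuous_const)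

lemma T_mul_circleInt (m : ℤ) :
    T * (∮ z in C(0,1), z ^ m • resolvent T z)
      = (∮ z in C(0,1), z ^ (m + 1) • resolvent T z)
        - (∮ z in C(0,1), z ^ m) • (1:A) := by
  have hne : ∀ θ : ℝ, circleMap 0 1 θ ≠ 0 := fun θ => circleMap_ne_center one_ne_zero
  have hInt : IntervalIntegrable (fun θ => deriv (circleMap 0 1) θ •
      ((circleMap 0 1 θ) ^ m • resolvent T (circleMap 0 1 θ))) volume 0 (2 * Real.pi) :=
    (contIntegrand h0 ha1 h1b hres m).intervalIntegrable _ _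
  have hInt1 : IntervalIntegrable (fun θ => deriv (circleMap 0 1) θ •
      ((circleMap 0 1 θ) ^ (m+1) • resolvent T (circleMap 0 1 θ))) volume 0 (2 * Real.pi) :=
    (contIntegrand h0 ha1 h1b hres (m+1)).intervalIntegrable _ _
  have hInt2 : IntervalIntegrable (fun θ => deriv (circleMap 0 1) θ •
      ((circleMap 0 1 θ) ^ m • (1:A))) volume 0 (2 * Real.pi) :=
    (contIntegrand' h0 ha1 h1b hres m).intervalIntegrable _ _
  calc T * (∮ z in C(0,1), z ^ m • resolvent T z)
      = (ContinuousLinearMap.mul ℂ A T) (∫ θ in (0:ℝ)..2 * Real.pi,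
          deriv (circleMap 0 1) θ •
            ((circleMap 0 1 θ) ^ m • resolvent T (circleMap 0 1 θ))) := rfl
    _ = ∫ θ in (0:ℝ)..2 * Real.pi, (ContinuousLinearMap.mul ℂ A T)
          (deriv (circleMap 0 1) θ •
            ((circleMap 0 1 θ) ^ m • resolvent T (circleMap 0 1 θ))) :=
        ((ContinuousLinearMap.mul ℂ A T).intervalIntegral_comp_comm hInt).symm
    _ = ∫ θ in (0:ℝ)..2 * Real.pi,
          (deriv (circleMap 0 1) θ •
            ((circleMap 0 1 θ) ^ (m+1) • resolvent T (circleMap 0 1 θ))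
          - deriv (circleMap 0 1) θ • ((circleMap 0 1 θ) ^ m • (1:A))) := by
        congr 1
        funext θ
        rw [ContinuousLinearMap.map_smul, ContinuousLinearMap.mul_apply']
        rw [mul_smul_comm, T_mul_resolvent (circle_mem_res h0 ha1 h1b hres θ)]
        rw [smul_sub, smul_smul, ← zpow_add_one₀ (hne θ), smul_sub]
    _ = (∮ z in C(0,1), z ^ (m + 1) • resolvent T z)
        - (∮ z in C(0,1), z ^ m • (1:A)) := by
        rw [intervalIntegral.integral_sub hInt1 hInt2]
        rfl
    _ = _ := by
        rw [circleIntegral.integral_smul_const]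

lemma T_mul_coeffA (n : ℤ) :
    T * coeffA T n = coeffA T (n - 1) - (if n = 0 then (1:A) else 0) := by
  rw [coeffA, mul_smul_comm, T_mul_circleInt h0 ha1 h1b hres (-n-1),
    show (-n - 1 + 1) = -(n-1) - 1 by ring, smul_sub, coeffA]
  congr 1
  rcases eq_or_ne n 0 with h | h
  · subst h
    have hfun : (fun z : ℂ => z ^ (-(0:ℤ)-1)) = fun z : ℂ => (z - 0)⁻¹ := by
      funext z
      norm_num
    simp only [hfun]
    rw [circleIntegral.integral_sub_inv_of_mem_ball (by simp : (0:ℂ) ∈ ball (0:ℂ) 1),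
      smul_smul, inv_mul_cancel₀ Complex.two_pi_I_ne_zero, one_smul]
    simp
  · have hfun : (fun z : ℂ => z ^ (-n-1)) = fun z : ℂ => (z - 0) ^ (-n-1) := by
      funext z
      rw [sub_zero]
    simp only [hfun]
    rw [circleIntegral.integral_sub_zpow_of_ne (by omega : -n-1 ≠ -1)]
    simp [h]

lemma coeffA_mul_T (n : ℤ) : coeffA T n * T = T * coeffA T n := by
  rw [coeffA, smul_mul_assoc, mul_smul_comm]
  congr 1
  have hInt : IntervalIntegrable (fun θ => deriv (circleMap 0 1) θ •
      ((circleMap 0 1 θ) ^ (-n-1) • resolvent T (circleMap 0 1 θ))) volume 0 (2 * Real.pi) :=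
    (contIntegrand h0 ha1 h1b hres (-n-1)).intervalIntegrable _ _
  calc (∮ z in C(0,1), z ^ (-n-1) • resolvent T z) * T
      = ((ContinuousLinearMap.mul ℂ A).flip T) (∫ θ in (0:ℝ)..2 * Real.pi,
          deriv (circleMap 0 1) θ •
            ((circleMap 0 1 θ) ^ (-n-1) • resolvent T (circleMap 0 1 θ))) := rfl
    _ = ∫ θ in (0:ℝ)..2 * Real.pi, ((ContinuousLinearMap.mul ℂ A).flip T)
          (deriv (circleMap 0 1) θ •
            ((circleMap 0 1 θ) ^ (-n-1) • resolvent T (circleMap 0 1 θ))) :=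
        (((ContinuousLinearMap.mul ℂ A).flip T).intervalIntegral_comp_comm hInt).symm
    _ = ∫ θ in (0:ℝ)..2 * Real.pi, (ContinuousLinearMap.mul ℂ A T)
          (deriv (circleMap 0 1) θ •
            ((circleMap 0 1 θ) ^ (-n-1) • resolvent T (circleMap 0 1 θ))) := by
        congr 1
        funext θ
        simp only [ContinuousLinearMap.flip_apply, ContinuousLinearMap.mul_apply']
        rw [smul_mul_assoc, smul_mul_assoc,
          resolvent_comm (circle_mem_res h0 ha1 h1b hres θ), mul_smul_comm, mul_smul_comm]
    _ = (ContinuousLinearMap.mul ℂ A T) (∫ θ in (0:ℝ)..2 * Real.pi,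
          deriv (circleMap 0 1) θ •
            ((circleMap 0 1 θ) ^ (-n-1) • resolvent T (circleMap 0 1 θ))) :=
        (ContinuousLinearMap.mul ℂ A T).intervalIntegral_comp_comm hInt
    _ = T * ∮ z in C(0,1), z ^ (-n-1) • resolvent T z := rfl

-- algebraic consequences
lemma coeffA_pow_neg (k : ℕ) :
    (T ^ k) * coeffA T (-1) = coeffA T (-1 - k) := by
  induction k with
  | zero => simp
  | succ k ih =>
      rw [pow_succ', mul_assoc, ih, T_mul_coeffA h0 ha1 h1b hres (-1 - k),
        if_neg (by omega), sub_zero]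
      congr 1
      push_cast
      ring

lemma coeffA_pow_pos (k : ℕ) :
    coeffA T (k : ℤ) * (T ^ k) = coeffA T 0 := by
  induction k with
  | zero => simp
  | succ k ih =>
      have hcast : ((k+1:ℕ):ℤ) = (k:ℤ)+1 := by push_cast; ring
      rw [hcast, pow_succ', ← mul_assoc, coeffA_mul_T h0 ha1 h1b hres,
        T_mul_coeffA h0 ha1 h1b hres ((k:ℤ)+1), if_neg (by omega), sub_zero,
        show ((k:ℤ)+1) - 1 = (k:ℤ) by ring]
      exact ih

end Coeff


end DTaux

open MeasureTheory Metric Set Filter Topology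

/-- If `T` is a weakly hypercyclic bounded operator on a nonzero complex Banach space `X`,
then the spectrum `σ(T)` contains a point of the unit circle. -/
theorem stmt_9 {X : Type*} [NormedAddCommGroup X] [NormedSpace ℂ X] [CompleteSpace X]
    [Nontrivial X] (T : X →L[ℂ] X)
    (hT : ∃ x : X, Dense (Set.range fun n : ℕ => toWeakSpace ℂ X ((T ^ n) x))) :
    ∃ z ∈ spectrum ℂ T, ‖z‖ = 1 := by
  classical
  obtain ⟨x, hx⟩ := hT
  by_contra hcon
  push_neg at hcon
  -- Step 1: an annulus around the unit circle inside the resolvent set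
  obtain ⟨ε, hε0, hε2, hres⟩ : ∃ ε : ℝ, 0 < ε ∧ ε ≤ 2⁻¹ ∧ ∀ z : ℂ,
      1 - ε ≤ ‖z‖ → ‖z‖ ≤ 1 + ε → IsUnit (algebraMap ℂ (X →L[ℂ] X) z - T) := by
    rcases Set.eq_empty_or_nonempty (spectrum ℂ T) with hσ | hσ
    · refine ⟨2⁻¹, by norm_num, le_rfl, fun z _ _ => ?_⟩
      by_contra hz
      have hmem : z ∈ spectrum ℂ T := hz
      rw [hσ] at hmem
      exact hmem
    · have hσc : IsCompact (spectrum ℂ T) := spectrum.isCompact T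
      obtain ⟨z₀, hz₀s, hz₀min⟩ := (isCompact_sphere (0:ℂ) 1).exists_isMinOn
        (NormedSpace.sphere_nonempty.mpr zero_le_one)
        (Metric.continuous_infDist_pt (spectrum ℂ T)).continuousOn
      have hz₀norm : ‖z₀‖ = 1 := mem_sphere_zero_iff_norm.mp hz₀s
      have hz₀ : z₀ ∉ spectrum ℂ T := by
        intro hmem
        exact hcon z₀ hmem (by rw [hz₀norm])
      have hδ : 0 < Metric.infDist z₀ (spectrum ℂ T) :=
        (hσc.isClosed.notMem_iff_infDist_pos hσ).mp hz₀
      set δ := Metric.infDist z₀ (spectrum ℂ T) with hδdef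
      refine ⟨min (δ/2) 2⁻¹, by positivity, min_le_right _ _, fun z h1 h2 => ?_⟩
      by_contra hz
      have hzs : z ∈ spectrum ℂ T := hz
      have hεle : min (δ/2) 2⁻¹ ≤ δ/2 := min_le_left _ _
      have hεle2 : min (δ/2) 2⁻¹ ≤ 2⁻¹ := min_le_right _ _
      have hzpos : (0:ℝ) < ‖z‖ := by linarith
      have hz0 : z ≠ 0 := by
        intro h
        rw [h, norm_zero] at hzpos
        exact lt_irrefl _ hzpos
      set z' : ℂ := ((‖z‖ : ℂ))⁻¹ * z with hz'def
      have hz'mem : z' ∈ sphere (0:ℂ) 1 := by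
        rw [mem_sphere_zero_iff_norm, hz'def, norm_mul, norm_inv, Complex.norm_real,
          Real.norm_eq_abs, abs_of_pos hzpos, inv_mul_cancel₀ (ne_of_gt hzpos)]
      have hdist : dist z' z = |1 - ‖z‖| := by
        rw [dist_eq_norm]
        have heq : z' - z = (((‖z‖⁻¹ - 1 : ℝ)) : ℂ) * z := by
          rw [hz'def]
          push_cast
          ring
        rw [heq, norm_mul, Complex.norm_real, Real.norm_eq_abs,
          show |‖z‖⁻¹ - 1| * ‖z‖ = |(‖z‖⁻¹ - 1) * ‖z‖| by
            rw [abs_mul, abs_of_nonneg (norm_nonneg z)]]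
        congr 1
        rw [sub_mul, inv_mul_cancel₀ (ne_of_gt hzpos), one_mul]
      have hmin : δ ≤ Metric.infDist z' (spectrum ℂ T) := hz₀min hz'mem
      have hle : Metric.infDist z' (spectrum ℂ T) ≤ dist z' z :=
        Metric.infDist_le_dist_of_mem hzs
      have habs : |1 - ‖z‖| ≤ min (δ/2) 2⁻¹ := by
        rw [abs_le]
        constructor <;> linarith
      rw [hdist] at hle
      linarith
  set ra : ℝ := 1 - ε with hra
  set rb : ℝ := 1 + ε with hrb
  have h0 : 0 < ra := by rw [hra]; linarith
  have ha1 : ra ≤ 1 := by rw [hra]; linarith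
  have h1b : 1 ≤ rb := by rw [hrb]; linarith
  have hres' : ∀ z : ℂ, ra ≤ ‖z‖ → ‖z‖ ≤ rb →
      IsUnit (algebraMap ℂ (X →L[ℂ] X) z - T) := fun z u v => hres z u v
  -- infinite X
  obtain ⟨x₀, hx₀⟩ := exists_ne (0 : X)
  have hXinf : Infinite X := Infinite.of_injective (fun c : ℂ => c • x₀) (by
    intro c₁ c₂ h
    have h' : c₁ • x₀ = c₂ • x₀ := h
    by_contra hne
    have : (c₁ - c₂) • x₀ = 0 := by rw [sub_smul, h', sub_self]
    rcases smul_eq_zero.mp this with h' | h'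
    · exact hne (sub_eq_zero.mp h')
    · exact hx₀ h')
  -- Case A : some power kills x
  by_cases hzero : ∃ m, (T ^ m) x = 0
  · obtain ⟨m, hm⟩ := hzero
    have horbit : ∀ n, (T ^ n) x ∈ (Finset.range (m+1)).image (fun i => (T ^ i) x) := by
      intro n
      rcases le_or_gt n m with h | h
      · exact Finset.mem_image.mpr ⟨n, Finset.mem_range.mpr (by omega), rfl⟩
      · have hTn : (T ^ n) x = 0 := by
          have hp : T ^ n = T ^ (n - m) * T ^ m := by
            rw [← pow_add]
            congr 1
            omega
          rw [hp, ContinuousLinearMap.mul_apply, hm, map_zero]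
        rw [hTn, ← hm]
        exact Finset.mem_image.mpr ⟨m, by simp, rfl⟩
    set F := (Finset.range (m+1)).image (fun i => (T ^ i) x) with hF
    obtain ⟨u, hu⟩ := Infinite.exists_notMem_finset F
    set φ : X → (X →L[ℂ] ℂ) := fun v' =>
      if h : u - v' ≠ 0 then (exists_dual_vector ℂ (u - v') (norm_ne_zero_iff.mpr h)).choose else 0 with hφ
    have hspec : ∀ v' ∈ F, (φ v') (u - v') = (‖u - v'‖ : ℂ) := by
      intro v' hv'
      have hne : u - v' ≠ 0 := sub_ne_zero.mpr fun h => hu (h ▸ hv')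
      rw [hφ]
      simp only [dif_pos hne]
      exact (exists_dual_vector ℂ (u - v') (norm_ne_zero_iff.mpr hne)).choose_spec.2
    obtain ⟨n, hn⟩ := DTaux.dense_hits hx F φ (fun v' => (φ v') u)
      (fun v' => ‖u - v'‖) u (by
        intro v' hv'
        have hne : u - v' ≠ 0 := sub_ne_zero.mpr fun h => hu (h ▸ hv')
        simp only [sub_self, norm_zero]
        exact norm_pos_iff.mpr hne)
    have hmemF := horbit n
    have hval := hn _ hmemF
    set v' := (T ^ n) x
    have heq : (φ v') v' - (φ v') u = -((φ v') (u - v')) := by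
      rw [map_sub]
      ring
    rw [heq, hspec v' hmemF, norm_neg, Complex.norm_real, Real.norm_eq_abs,
      abs_of_nonneg (norm_nonneg _)] at hval
    exact lt_irrefl _ hval
  push_neg at hzero
  -- bounds for coefficients
  obtain ⟨M, hM0, hMa, hMb⟩ := DTaux.exists_boundA h0 ha1 h1b hres'
  set P := DTaux.coeffA T (-1) with hP
  set y := x - P x with hy
  set wv := DTaux.coeffA T 0 y with hwv
  have hxPy : x = P x + y := by rw [hy]; abel
  have hTny : ∀ n : ℕ, (T ^ n) (P x) = DTaux.coeffA T (-1 - n) x := by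
    intro n
    have h := DTaux.coeffA_pow_neg h0 ha1 h1b hres' n
    calc (T ^ n) (P x) = (T ^ n * DTaux.coeffA T (-1)) x := rfl
      _ = DTaux.coeffA T (-1 - n) x := by rw [h]
  have hTny2 : ∀ n : ℕ, (T ^ n) (P y) = DTaux.coeffA T (-1 - n) y := by
    intro n
    have h := DTaux.coeffA_pow_neg h0 ha1 h1b hres' n
    calc (T ^ n) (P y) = (T ^ n * DTaux.coeffA T (-1)) y := rfl
      _ = DTaux.coeffA T (-1 - n) y := by rw [h]
  by_cases hw : wv = 0
  · -- Case B : bounded orbit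
    have hTw : T wv = P y - y := by
      have h := DTaux.T_mul_coeffA h0 ha1 h1b hres' 0
      rw [if_pos rfl] at h
      calc T wv = (T * DTaux.coeffA T 0) y := rfl
        _ = (DTaux.coeffA T (0 - 1) - 1) y := by rw [h]
        _ = P y - y := by
            rw [ContinuousLinearMap.sub_apply, ContinuousLinearMap.one_apply]
            norm_num
            rfl
    have hPy : P y = y := by
      rw [hw, map_zero] at hTw
      exact sub_eq_zero.mp hTw.symm
    set C := M * (‖x‖ + ‖y‖) with hC
    have hC0 : 0 ≤ C := by
      rw [hC]
      positivity
    have hbound : ∀ n : ℕ, ‖(T ^ n) x‖ ≤ C := by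
      intro n
      have hxn : (T ^ n) x = DTaux.coeffA T (-1 - n) x + DTaux.coeffA T (-1 - n) y := by
        conv_lhs => rw [hxPy, ← hPy]
        rw [map_add, hTny n, hTny2 n]
      have hran : ra ^ n ≤ 1 := pow_le_one₀ h0.le ha1
      have hno : ‖DTaux.coeffA T (-1 - n)‖ ≤ M := by
        have := hMa n
        nlinarith [pow_nonneg h0.le n, norm_nonneg (DTaux.coeffA T (-1 - (n:ℤ)))]
      calc ‖(T ^ n) x‖ ≤ ‖DTaux.coeffA T (-1 - n) x‖ + ‖DTaux.coeffA T (-1 - n) y‖ := by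
            rw [hxn]; exact norm_add_le _ _
        _ ≤ ‖DTaux.coeffA T (-1 - n)‖ * ‖x‖ + ‖DTaux.coeffA T (-1 - n)‖ * ‖y‖ :=
            add_le_add (ContinuousLinearMap.le_opNorm _ _) (ContinuousLinearMap.le_opNorm _ _)
        _ ≤ M * ‖x‖ + M * ‖y‖ := add_le_add
            (mul_le_mul_of_nonneg_right hno (norm_nonneg _))
            (mul_le_mul_of_nonneg_right hno (norm_nonneg _))
        _ = C := by rw [hC]; ring
    obtain ⟨f₀, hf₀n, hf₀x⟩ := exists_dual_vector ℂ x₀ (norm_ne_zero_iff.mpr hx₀)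
    set p : X := (((C + 2) / ‖x₀‖ : ℝ) : ℂ) • x₀ with hpdef
    have hx₀pos : (0:ℝ) < ‖x₀‖ := norm_pos_iff.mpr hx₀
    have hf₀p : f₀ p = ((C + 2 : ℝ) : ℂ) := by
      rw [hpdef, _root_.map_smul, hf₀x, smul_eq_mul]
      norm_cast
      field_simp
      rw [show (RCLike.ofReal ‖x₀‖ : ℂ) = ((‖x₀‖ : ℝ) : ℂ) from rfl, ← Complex.ofReal_mul,
        div_mul_cancel₀ _ (ne_of_gt hx₀pos)]
    obtain ⟨n, hn⟩ := DTaux.dense_hits hx ({0} : Finset ℕ) (fun _ => f₀)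
      (fun _ => ((C + 2 : ℝ) : ℂ)) (fun _ => 1) p (by
        intro i _
        rw [hf₀p, sub_self, norm_zero]
        norm_num)
    have hval := hn 0 (Finset.mem_singleton_self 0)
    have hb1 : ‖f₀ ((T ^ n) x)‖ ≤ C := by
      calc ‖f₀ ((T ^ n) x)‖ ≤ ‖f₀‖ * ‖(T ^ n) x‖ := ContinuousLinearMap.le_opNorm _ _
        _ = ‖(T ^ n) x‖ := by rw [hf₀n, one_mul]
        _ ≤ C := hbound n
    have hb2 : ‖((C + 2 : ℝ) : ℂ)‖ - ‖f₀ ((T ^ n) x)‖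
        ≤ ‖f₀ ((T ^ n) x) - ((C + 2 : ℝ) : ℂ)‖ := by
      rw [norm_sub_rev]
      exact norm_sub_norm_le _ _
    rw [Complex.norm_real, Real.norm_eq_abs,
      abs_of_nonneg (by linarith : (0:ℝ) ≤ C + 2)] at hb2
    linarith
  · -- Case C : growth
    have hwpos : 0 < ‖wv‖ := norm_pos_iff.mpr hw
    have hyn : ∀ n : ℕ, DTaux.coeffA T (n : ℤ) ((T ^ n) y) = wv := by
      intro n
      have h := DTaux.coeffA_pow_pos h0 ha1 h1b hres' n
      calc DTaux.coeffA T (n:ℤ) ((T ^ n) y) = (DTaux.coeffA T (n:ℤ) * T ^ n) y := rfl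
        _ = DTaux.coeffA T 0 y := by rw [h]
    set cw := ‖wv‖ / M with hcw
    have hcwpos : 0 < cw := by rw [hcw]; positivity
    have hrbpos : (0:ℝ) < rb := by rw [hrb]; linarith
    have hgrow : ∀ n : ℕ, cw * rb ^ n ≤ ‖(T ^ n) y‖ := by
      intro n
      have h1 : ‖wv‖ ≤ ‖DTaux.coeffA T (n:ℤ)‖ * ‖(T ^ n) y‖ := by
        conv_lhs => rw [← hyn n]
        exact ContinuousLinearMap.le_opNorm _ _
      have h2 : ‖DTaux.coeffA T (n:ℤ)‖ * rb ^ n ≤ M := hMb n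
      have hrbn : (0:ℝ) < rb ^ n := pow_pos hrbpos n
      rw [hcw, div_mul_eq_mul_div, div_le_iff₀ hM0]
      nlinarith [norm_nonneg ((T ^ n) y), norm_nonneg (DTaux.coeffA T (n:ℤ))]
    have hyn0 : ∀ n : ℕ, (T ^ n) y ≠ 0 := by
      intro n h
      have hh := hgrow n
      rw [h, norm_zero] at hh
      nlinarith [pow_pos hrbpos n]
    set K := M * ‖x‖ with hK
    have hK0 : 0 ≤ K := by rw [hK]; positivity
    have hdecay : ∀ n : ℕ, ‖DTaux.coeffA T (-1 - n) x‖ ≤ K * ra ^ n := by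
      intro n
      calc ‖DTaux.coeffA T (-1 - n) x‖ ≤ ‖DTaux.coeffA T (-1 - n)‖ * ‖x‖ :=
            ContinuousLinearMap.le_opNorm _ _
        _ ≤ (M * ra ^ n) * ‖x‖ :=
            mul_le_mul_of_nonneg_right (hMa n) (norm_nonneg _)
        _ = K * ra ^ n := by rw [hK]; ring
    set β := min rb 2 with hβ
    have hβ1 : 1 < β := lt_min (by rw [hrb]; linarith) one_lt_two
    have hβpos : (0:ℝ) < β := by linarith
    set q := Real.sqrt β with hqdef
    have hqq : q * q = β := Real.mul_self_sqrt hβpos.le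
    have hqnn : 0 ≤ q := Real.sqrt_nonneg β
    have hq1 : 1 < q := by
      rw [hqdef, show (1:ℝ) = Real.sqrt 1 by simp]
      exact Real.sqrt_lt_sqrt (by norm_num) hβ1
    have hqpos : 0 < q := by linarith
    have hqinvpos : 0 < q⁻¹ := by positivity
    have hqinv1 : q⁻¹ < 1 := by
      nlinarith [mul_inv_cancel₀ (ne_of_gt hqpos)]
    set H := (1 - q⁻¹)⁻¹ with hH
    have hH0 : 0 < H := by
      rw [hH]
      have : 0 < 1 - q⁻¹ := by linarith
      positivity
    have hgeomsum : ∀ N : ℕ, ∑ i ∈ Finset.range N, (q⁻¹) ^ i ≤ H := by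
      intro N
      rw [hH]
      calc ∑ i ∈ Finset.range N, (q⁻¹) ^ i ≤ ∑' i : ℕ, (q⁻¹) ^ i :=
            Summable.sum_le_tsum _ (fun i _ => by positivity)
              (summable_geometric_of_lt_one hqinvpos.le hqinv1)
        _ = (1 - q⁻¹)⁻¹ := tsum_geometric_of_lt_one hqinvpos.le hqinv1
    set W := 1 + H * K with hW
    have hW0 : 0 < W := by rw [hW]; nlinarith
    set D := W / cw with hD
    have hD0 : 0 < D := by rw [hD]; positivity
    obtain ⟨N₀, hN₀⟩ : ∃ N₀ : ℕ, D * H * (q⁻¹) ^ N₀ < 1 := by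
      have htend : Tendsto (fun N : ℕ => D * H * (q⁻¹) ^ N) atTop (𝓝 (D * H * 0)) :=
        (tendsto_pow_atTop_nhds_zero_of_lt_one hqinvpos.le hqinv1).const_mul _
      rw [mul_zero] at htend
      exact (htend.eventually (gt_mem_nhds one_pos)).exists
    set g : ℕ → (X →L[ℂ] ℂ) :=
      fun n => (exists_dual_vector ℂ ((T ^ n) y) (norm_ne_zero_iff.mpr (hyn0 n))).choose with hgdef
    have hgn : ∀ n, ‖g n‖ = 1 := fun n => (exists_dual_vector ℂ _ (norm_ne_zero_iff.mpr (hyn0 n))).choose_spec.1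
    have hgv : ∀ n, (g n) ((T ^ n) y) = (‖(T ^ n) y‖ : ℂ) :=
      fun n => (exists_dual_vector ℂ _ (norm_ne_zero_iff.mpr (hyn0 n))).choose_spec.2
    have hfN : ∀ N : ℕ, ∃ fN : X →L[ℂ] ℂ, ‖fN‖ ≤ H ∧
        ∀ i, i < N → 1 + H * K * ra ^ (N₀ + i) ≤ ‖fN ((T ^ (N₀ + i)) y)‖ := by
      intro N
      have hterm : ∀ i : Fin N,
          (1 + H * K * ra ^ (N₀ + (i:ℕ)))
              / ((q⁻¹) ^ (N₀ + (i:ℕ)) * ‖(T ^ (N₀ + (i:ℕ))) y‖)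
            ≤ D * (q⁻¹) ^ (N₀ + (i:ℕ)) := by
        intro i
        set n := N₀ + (i:ℕ) with hn
        have h1 : 1 + H * K * ra ^ n ≤ W := by
          rw [hW]
          have hr1 : ra ^ n ≤ 1 := pow_le_one₀ h0.le ha1
          nlinarith [mul_nonneg hH0.le hK0, hr1, pow_nonneg h0.le n]
        have h4 : (q * q) ^ n ≤ rb ^ n :=
          pow_le_pow_left₀ (by positivity) (by rw [hqq, hβ]; exact min_le_left _ _) n
        have h5 : (q⁻¹) ^ n * (q * q) ^ n = q ^ n := by
          rw [← mul_pow]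
          congr 1
          field_simp
        have hstep : cw * q ^ n ≤ (q⁻¹) ^ n * ‖(T ^ n) y‖ := by
          calc cw * q ^ n = (q⁻¹) ^ n * (cw * (q * q) ^ n) := by rw [← h5]; ring
            _ ≤ (q⁻¹) ^ n * (cw * rb ^ n) :=
                mul_le_mul_of_nonneg_left
                  (mul_le_mul_of_nonneg_left h4 hcwpos.le) (by positivity)
            _ ≤ (q⁻¹) ^ n * ‖(T ^ n) y‖ :=
                mul_le_mul_of_nonneg_left (hgrow n) (by positivity)
        have hqnpos : (0:ℝ) < cw * q ^ n := by positivity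
        have hrhs : D * (q⁻¹) ^ n = W / (cw * q ^ n) := by
          rw [hD, inv_pow, eq_div_iff (ne_of_gt hqnpos)]
          field_simp
        calc (1 + H * K * ra ^ n) / ((q⁻¹) ^ n * ‖(T ^ n) y‖)
            ≤ W / (cw * q ^ n) := by
              apply div_le_div₀ hW0.le h1 hqnpos hstep
          _ = D * (q⁻¹) ^ n := hrhs.symm
      have hsum : ∑ i : Fin N, (1 + H * K * ra ^ (N₀ + (i:ℕ)))
          / ((q⁻¹) ^ (N₀ + (i:ℕ)) * ‖(T ^ (N₀ + (i:ℕ))) y‖) < 1 := by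
        calc ∑ i : Fin N, (1 + H * K * ra ^ (N₀ + (i:ℕ)))
              / ((q⁻¹) ^ (N₀ + (i:ℕ)) * ‖(T ^ (N₀ + (i:ℕ))) y‖)
            ≤ ∑ i : Fin N, D * (q⁻¹) ^ (N₀ + (i:ℕ)) :=
              Finset.sum_le_sum fun i _ => hterm i
          _ = D * (q⁻¹) ^ N₀ * ∑ i ∈ Finset.range N, (q⁻¹) ^ i := by
              rw [Fin.sum_univ_eq_sum_range (fun i => D * (q⁻¹) ^ (N₀ + i)) N,
                Finset.mul_sum]
              refine Finset.sum_congr rfl fun i _ => ?_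
              rw [pow_add]
              ring
          _ ≤ D * (q⁻¹) ^ N₀ * H :=
              mul_le_mul_of_nonneg_left (hgeomsum N) (by positivity)
          _ < 1 := by
              rw [show D * (q⁻¹) ^ N₀ * H = D * H * (q⁻¹) ^ N₀ by ring]
              exact hN₀
      obtain ⟨t, ht1, ht2⟩ := DTaux.exists_good_t N
        (fun i j => (((q⁻¹) ^ (N₀ + (j:ℕ)) : ℝ) : ℂ) * (g (N₀ + (j:ℕ))) ((T ^ (N₀ + (i:ℕ))) y))
        (fun i => 1 + H * K * ra ^ (N₀ + (i:ℕ)))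
        (fun i => (q⁻¹) ^ (N₀ + (i:ℕ)) * ‖(T ^ (N₀ + (i:ℕ))) y‖)
        (fun i => mul_pos (by positivity) (norm_pos_iff.mpr (hyn0 _)))
        (fun i => by simp only [hgv]; push_cast; ring)
        (fun i => by positivity)
        hsum
      refine ⟨∑ i : Fin N, ((((q⁻¹) ^ (N₀ + (i:ℕ)) * t i : ℝ)) : ℂ) • g (N₀ + (i:ℕ)), ?_, ?_⟩
      · calc ‖∑ i : Fin N, ((((q⁻¹) ^ (N₀ + (i:ℕ)) * t i : ℝ)) : ℂ) • g (N₀ + (i:ℕ))‖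
            ≤ ∑ i : Fin N, ‖((((q⁻¹) ^ (N₀ + (i:ℕ)) * t i : ℝ)) : ℂ) • g (N₀ + (i:ℕ))‖ :=
              norm_sum_le _ _
          _ ≤ ∑ i : Fin N, (q⁻¹) ^ (i:ℕ) := by
              refine Finset.sum_le_sum fun i _ => ?_
              have hns : ‖((((q⁻¹) ^ (N₀ + (i:ℕ)) * t i : ℝ)) : ℂ) • g (N₀ + (i:ℕ))‖
                  = |(q⁻¹) ^ (N₀ + (i:ℕ)) * t i| := by
                rw [norm_smul (α := ℂ) (β := X →L[ℂ] ℂ), hgn, mul_one, Complex.norm_real,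
                  Real.norm_eq_abs]
              rw [hns, abs_mul,
                abs_of_nonneg (by positivity : (0:ℝ) ≤ (q⁻¹) ^ (N₀ + (i:ℕ)))]
              have hb1 : (q⁻¹) ^ (N₀ + (i:ℕ)) * |t i| ≤ (q⁻¹) ^ (N₀ + (i:ℕ)) :=
                mul_le_of_le_one_right (by positivity) (ht1 i)
              have hb2 : (q⁻¹) ^ (N₀ + (i:ℕ)) ≤ (q⁻¹) ^ (i:ℕ) := by
                rw [pow_add]
                nlinarith [pow_nonneg hqinvpos.le (i:ℕ),
                  pow_le_one₀ hqinvpos.le hqinv1.le (n := N₀),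
                  pow_nonneg hqinvpos.le N₀]
              linarith
          _ ≤ H := by
              rw [Fin.sum_univ_eq_sum_range (fun i => (q⁻¹) ^ i) N]
              exact hgeomsum N
      · intro i hiN
        have h := ht2 ⟨i, hiN⟩
        have hfeq : (∑ j : Fin N, ((((q⁻¹) ^ (N₀ + (j:ℕ)) * t j : ℝ)) : ℂ) • g (N₀ + (j:ℕ)))
              ((T ^ (N₀ + i)) y)
            = ∑ j : Fin N, (t j : ℂ) *
              ((((q⁻¹) ^ (N₀ + (j:ℕ)) : ℝ) : ℂ) * (g (N₀ + (j:ℕ))) ((T ^ (N₀ + i)) y)) := by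
          rw [ContinuousLinearMap.sum_apply]
          refine Finset.sum_congr rfl fun j _ => ?_
          rw [ContinuousLinearMap.smul_apply, smul_eq_mul]
          push_cast
          ring
        rw [hfeq]
        exact h
    choose fN hfN1 hfN2 using hfN
    set u : ℕ → WeakDual ℂ X := fun N => StrongDual.toWeakDual (fN N) with hu
    have hball : ∀ N, u N ∈ WeakDual.toStrongDual ⁻¹' Metric.closedBall 0 H := by
      intro N
      simp only [Set.mem_preimage, Metric.mem_closedBall, dist_zero_right]
      exact hfN1 N
    have hmaple : Filter.map u atTop ≤ 𝓟 (WeakDual.toStrongDual ⁻¹' Metric.closedBall 0 H) := by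
      rw [Filter.le_principal_iff, Filter.mem_map]
      exact Filter.Eventually.of_forall hball
    obtain ⟨φ, hφK, hφcl⟩ :=
      (WeakDual.isCompact_closedBall (𝕜 := ℂ) (E := X) 0 H).exists_clusterPt hmaple
    have hφval : ∀ n, N₀ ≤ n → 1 + H * K * ra ^ n ≤ ‖φ ((T ^ n) y)‖ := by
      intro n hn
      set Cn : Set (WeakDual ℂ X) := {ψ | 1 + H * K * ra ^ n ≤ ‖ψ ((T ^ n) y)‖} with hCn
      have hclosed : IsClosed Cn :=
        isClosed_le continuous_const (WeakDual.eval_continuous ((T ^ n) y)).norm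
      have hle2 : Filter.map u atTop ≤ 𝓟 Cn := by
        rw [Filter.le_principal_iff, Filter.mem_map]
        refine Filter.eventually_atTop.mpr ⟨n - N₀ + 1, fun N hN => ?_⟩
        have h := hfN2 N (n - N₀) (by omega)
        rw [show N₀ + (n - N₀) = n by omega] at h
        exact h
      have hcl2 : ClusterPt φ (𝓟 Cn) := hφcl.mono hle2
      have hmem : φ ∈ closure Cn := mem_closure_iff_clusterPt.mpr hcl2
      rwa [hclosed.closure_eq] at hmem
    have hφnorm : ‖WeakDual.toStrongDual φ‖ ≤ H := by
      simpa [Metric.mem_closedBall, dist_zero_right] using hφK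
    have hfinal : ∀ n, N₀ ≤ n → (1:ℝ) ≤ ‖φ ((T ^ n) x)‖ := by
      intro n hn
      have hdec : (T ^ n) x = DTaux.coeffA T (-1 - n) x + (T ^ n) y := by
        conv_lhs => rw [hxPy]
        rw [map_add, hTny n]
      have h1 : ‖φ (DTaux.coeffA T (-1 - n) x)‖ ≤ H * (K * ra ^ n) := by
        calc ‖φ (DTaux.coeffA T (-1 - n) x)‖
            ≤ ‖WeakDual.toStrongDual φ‖ * ‖DTaux.coeffA T (-1 - n) x‖ :=
              ContinuousLinearMap.le_opNorm _ _
          _ ≤ H * (K * ra ^ n) :=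
              mul_le_mul hφnorm (hdecay n) (norm_nonneg _) hH0.le
      have h2 := hφval n hn
      have h3 : φ ((T ^ n) y) = φ ((T ^ n) x) - φ (DTaux.coeffA T (-1 - n) x) := by
        rw [hdec, map_add]
        ring
      have h4 : ‖φ ((T ^ n) y)‖ ≤ ‖φ ((T ^ n) x)‖ + ‖φ (DTaux.coeffA T (-1 - n) x)‖ := by
        rw [h3]
        exact norm_sub_le _ _
      nlinarith [pow_nonneg h0.le n]
    set ffam : ℕ → (X →L[ℂ] ℂ) := fun i =>
      if h : i < N₀ then (exists_dual_vector ℂ ((T ^ i) x) (norm_ne_zero_iff.mpr (hzero i))).choose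
      else WeakDual.toStrongDual φ with hfamdef
    set εfam : ℕ → ℝ := fun i => if i < N₀ then ‖(T ^ i) x‖ / 2 else 1 with hεfamdef
    obtain ⟨n, hn⟩ := DTaux.dense_hits hx (Finset.range (N₀ + 1)) ffam (fun _ => 0) εfam 0 (by
      intro i _
      simp only [map_zero, sub_zero, norm_zero, hεfamdef]
      split_ifs with h
      · have := norm_pos_iff.mpr (hzero i)
        positivity
      · norm_num)
    rcases lt_or_ge n N₀ with hcase | hcase
    · have h := hn n (Finset.mem_range.mpr (by omega))
      simp only [hfamdef, hεfamdef, dif_pos hcase, if_pos hcase, sub_zero] at h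
      have hval2 : (exists_dual_vector ℂ ((T ^ n) x) (norm_ne_zero_iff.mpr (hzero n))).choose ((T ^ n) x)
          = ((‖(T ^ n) x‖ : ℝ) : ℂ) :=
        (exists_dual_vector ℂ ((T ^ n) x) (norm_ne_zero_iff.mpr (hzero n))).choose_spec.2
      rw [hval2, Complex.norm_real, Real.norm_eq_abs, abs_of_nonneg (norm_nonneg _)] at h
      have := norm_pos_iff.mpr (hzero n)
      linarith
    · have h := hn N₀ (Finset.mem_range.mpr (by omega))
      simp only [hfamdef, hεfamdef, dif_neg (lt_irrefl N₀), if_neg (lt_irrefl N₀),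
        sub_zero] at h
      have hge := hfinal n hcase
      have heqn : ‖(WeakDual.toStrongDual φ) ((T ^ n) x)‖ = ‖φ ((T ^ n) x)‖ := rfl
      rw [heqn] at h
      linarith
end

section
/- Let X be a nonzero complex Banach space and let T be an invertible bounded linear operator on X (with bounded inverse S = T⁻¹) such that the spectral radius of S satisfies r(S) < 1. Then T is not weakly hypercyclic: for every x ∈ X, the orbit {T^n x : n ≥ 0} is not dense in X for the weak topology. -/
noncomputable def stmt13Phase (z : ℂ) : ℂ := if z = 0 then 1 else z / ‖z‖

lemma stmt13Phase_norm (z : ℂ) : ‖stmt13Phase z‖ = 1 := by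
  unfold stmt13Phase
  split_ifs with h
  · simp
  · rw [norm_div, Complex.norm_real, Real.norm_of_nonneg (norm_nonneg z),
      div_self (norm_ne_zero_iff.mpr h)]

lemma stmt13Phase_mul (z : ℂ) : stmt13Phase z * ‖z‖ = z := by
  unfold stmt13Phase
  split_ifs with h
  · simp [h]
  · rw [div_mul_cancel₀]
    exact_mod_cast norm_ne_zero_iff.mpr h

noncomputable def stmt13cf (g : ℕ → ℕ → ℂ) : ℕ → ℕ → ℂ
  | 0 => fun _ => 0
  | n+1 => fun k =>
      if k = n then ((3:ℂ)⁻¹)^n * stmt13Phase (∑ j ∈ Finset.range n, stmt13cf g n j * g j n)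
      else stmt13cf g n k

noncomputable def stmt13c (g : ℕ → ℕ → ℂ) (n : ℕ) : ℂ := stmt13cf g (n+1) n

lemma stmt13cf_eq (g : ℕ → ℕ → ℂ) : ∀ n k, k < n → stmt13cf g n k = stmt13c g k := by
  intro n
  induction n with
  | zero => omega
  | succ n ih =>
    intro k hk
    rcases Nat.lt_succ_iff_lt_or_eq.mp hk with h | rfl
    · have h1 : stmt13cf g (n+1) k = stmt13cf g n k := by
        simp only [stmt13cf, if_neg (Nat.ne_of_lt h)]
      rw [h1, ih k h]
    · rfl

lemma stmt13c_spec (g : ℕ → ℕ → ℂ) (n : ℕ) :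
    stmt13c g n = ((3:ℂ)⁻¹)^n * stmt13Phase (∑ j ∈ Finset.range n, stmt13c g j * g j n) := by
  show stmt13cf g (n+1) n = _
  simp only [stmt13cf, if_pos rfl, if_true]
  congr 1
  congr 1
  apply Finset.sum_congr rfl
  intro j hj
  rw [stmt13cf_eq g n j (Finset.mem_range.mp hj)]

lemma stmt13c_norm (g : ℕ → ℕ → ℂ) (n : ℕ) : ‖stmt13c g n‖ = (3⁻¹:ℝ)^n := by
  rw [stmt13c_spec, norm_mul, stmt13Phase_norm, mul_one, norm_pow, norm_inv]
  norm_num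

lemma stmt13_core {X : Type*} [NormedAddCommGroup X] [NormedSpace ℂ X]
    (y : ℕ → X) (hy0 : y 0 ≠ 0) (hgrow : ∀ n, 9 * ‖y n‖ ≤ ‖y (n+1)‖) :
    ∃ f : X →L[ℂ] ℂ, ∀ n, ‖y 0‖ / 2 ≤ ‖f (y n)‖ := by
  have hpos : ∀ n, (9:ℝ)^n * ‖y 0‖ ≤ ‖y n‖ := by
    intro n
    induction n with
    | zero => simp
    | succ n ih =>
      calc (9:ℝ)^(n+1) * ‖y 0‖ = 9 * ((9:ℝ)^n * ‖y 0‖) := by ring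
      _ ≤ 9 * ‖y n‖ := by nlinarith
      _ ≤ ‖y (n+1)‖ := hgrow n
  have hy : ∀ n, y n ≠ 0 := by
    intro n hn
    have := hpos n
    rw [hn, norm_zero] at this
    have h0 : (0:ℝ) < ‖y 0‖ := norm_pos_iff.mpr hy0
    nlinarith [pow_pos (by norm_num : (0:ℝ) < 9) n]
  have hch : ∀ n, ∃ g : X →L[ℂ] ℂ, ‖g‖ = 1 ∧ g (y n) = ‖y n‖ :=
    fun n => exists_dual_vector ℂ (y n) (norm_ne_zero_iff.mpr (hy n))
  choose h hh1 hh2 using hch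
  set g : ℕ → ℕ → ℂ := fun j n => h j (y n) with hg
  set c : ℕ → ℂ := fun n => stmt13c g n with hc
  have hcn : ∀ n, ‖c n‖ = (3⁻¹:ℝ)^n := fun n => stmt13c_norm g n
  -- summability
  have hsn : Summable (fun n => c n • h n) := by
    apply Summable.of_norm
    have : ∀ n, ‖c n • h n‖ = (3⁻¹:ℝ)^n := by
      intro n
      rw [norm_smul (c n) (h n), hcn, hh1, mul_one]
    rw [funext this]
    exact summable_geometric_of_lt_one (by norm_num) (by norm_num)
  set f : X →L[ℂ] ℂ := ∑' n, c n • h n with hf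
  refine ⟨f, fun n => ?_⟩
  have hev : HasSum (fun k => c k * h k (y n)) (f (y n)) := by
    have := (hsn.hasSum).mapL (ContinuousLinearMap.apply ℂ ℂ (y n))
    simpa using this
  have hsev : Summable (fun k => c k * h k (y n)) := hev.summable
  have hsplit : f (y n) = (∑ k ∈ Finset.range (n+1), c k * h k (y n))
      + ∑' i, c (i + (n+1)) * h (i + (n+1)) (y n) := by
    rw [← hev.tsum_eq]
    exact (hsev.sum_add_tsum_nat_add (n+1)).symm
  -- head
  set A : ℂ := ∑ j ∈ Finset.range n, c j * g j n with hA
  have hhead : ∑ k ∈ Finset.range (n+1), c k * h k (y n)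
      = stmt13Phase A * ((‖A‖ : ℂ) + ((3⁻¹:ℝ)^n * ‖y n‖ : ℝ)) := by
    rw [Finset.sum_range_succ]
    have h1 : c n * h n (y n) = ((3:ℂ)⁻¹)^n * stmt13Phase A * ‖y n‖ := by
      have hcs : c n = ((3:ℂ)⁻¹)^n * stmt13Phase A := stmt13c_spec g n
      rw [hh2 n, hcs]
    have h2 : (A : ℂ) = stmt13Phase A * ‖A‖ := (stmt13Phase_mul A).symm
    have hAg : ∑ k ∈ Finset.range n, c k * h k (y n) = A := rfl
    rw [hAg, h1]
    rw [mul_add]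
    rw [← h2]
    congr 1
    push_cast
    ring
  have hheadnorm : ‖∑ k ∈ Finset.range (n+1), c k * h k (y n)‖
      = ‖A‖ + (3⁻¹:ℝ)^n * ‖y n‖ := by
    rw [hhead, norm_mul, stmt13Phase_norm, one_mul]
    have : ((‖A‖ : ℂ) + ((3⁻¹:ℝ)^n * ‖y n‖ : ℝ)) = ((‖A‖ + (3⁻¹:ℝ)^n * ‖y n‖ : ℝ) : ℂ) := by
      push_cast; ring
    rw [this, Complex.norm_real, Real.norm_of_nonneg]
    positivity
  -- tail
  have htail : ‖∑' i, c (i + (n+1)) * h (i + (n+1)) (y n)‖ ≤ (3⁻¹:ℝ)^n * ‖y n‖ / 2 := by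
    have hb : ∀ i, ‖c (i + (n+1)) * h (i + (n+1)) (y n)‖ ≤ (3⁻¹:ℝ)^(i+(n+1)) * ‖y n‖ := by
      intro i
      rw [norm_mul, hcn]
      gcongr
      calc ‖h (i+(n+1)) (y n)‖ ≤ ‖h (i+(n+1))‖ * ‖y n‖ := (h (i+(n+1))).le_opNorm (y n)
      _ = ‖y n‖ := by rw [hh1, one_mul]
    have hbs : Summable (fun i => (3⁻¹:ℝ)^(i+(n+1)) * ‖y n‖) := by
      apply Summable.mul_right
      exact (summable_geometric_of_lt_one (by norm_num) (by norm_num)).comp_injective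
        (add_left_injective (n+1))
    calc ‖∑' i, c (i + (n+1)) * h (i + (n+1)) (y n)‖
        ≤ ∑' i, (3⁻¹:ℝ)^(i+(n+1)) * ‖y n‖ := tsum_of_norm_bounded hbs.hasSum hb
    _ = (∑' i, (3⁻¹:ℝ)^i) * ((3⁻¹:ℝ)^(n+1) * ‖y n‖) := by
        rw [← tsum_mul_right]
        congr 1; funext i; rw [pow_add]; ring
    _ = (3/2) * ((3⁻¹:ℝ)^(n+1) * ‖y n‖) := by
        rw [tsum_geometric_of_lt_one (by norm_num) (by norm_num)]; norm_num
    _ = (3⁻¹:ℝ)^n * ‖y n‖ / 2 := by rw [pow_succ]; ring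
  -- combine
  have hlow : (3⁻¹:ℝ)^n * ‖y n‖ / 2 ≤ ‖f (y n)‖ := by
    rw [hsplit]
    have := norm_sub_norm_le (∑ k ∈ Finset.range (n+1), c k * h k (y n))
      (-(∑' i, c (i + (n+1)) * h (i + (n+1)) (y n)))
    rw [sub_neg_eq_add, norm_neg] at this
    have h2 : ‖A‖ + (3⁻¹:ℝ)^n * ‖y n‖ - (3⁻¹:ℝ)^n * ‖y n‖ / 2
        ≤ ‖∑ k ∈ Finset.range (n+1), c k * h k (y n)‖
          - ‖∑' i, c (i + (n+1)) * h (i + (n+1)) (y n)‖ := by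
      rw [hheadnorm]; linarith
    have h3 : (0:ℝ) ≤ ‖A‖ := norm_nonneg A
    linarith
  have hyn : (9:ℝ)^n * ‖y 0‖ ≤ ‖y n‖ := hpos n
  have h9 : (3⁻¹:ℝ)^n * ((9:ℝ)^n * ‖y 0‖) = (3:ℝ)^n * ‖y 0‖ := by
    rw [← mul_assoc, ← mul_pow]
    norm_num
  have h1le : (1:ℝ) ≤ (3:ℝ)^n := one_le_pow₀ (by norm_num)
  have h0 : (0:ℝ) ≤ ‖y 0‖ := norm_nonneg _
  calc ‖y 0‖ / 2 ≤ (3:ℝ)^n * ‖y 0‖ / 2 := by nlinarith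
  _ = (3⁻¹:ℝ)^n * ((9:ℝ)^n * ‖y 0‖) / 2 := by rw [h9]
  _ ≤ (3⁻¹:ℝ)^n * ‖y n‖ / 2 := by
      have : (0:ℝ) ≤ (3⁻¹:ℝ)^n := by positivity
      nlinarith
  _ ≤ ‖f (y n)‖ := hlow

lemma stmt13_exists_pow_small {X : Type*} [NormedAddCommGroup X] [NormedSpace ℂ X]
    [CompleteSpace X] [Nontrivial X]
    (S : X →L[ℂ] X) (hS : spectralRadius ℂ S < 1) : ∃ m, 1 ≤ m ∧ ‖S^m‖ < 1/9 := by
  obtain ⟨ρ, hρ1, hρ2⟩ := exists_between hS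
  have hG := spectrum.pow_nnnorm_pow_one_div_tendsto_nhds_spectralRadius S
  have h1 : ∀ᶠ n : ℕ in Filter.atTop, (‖S^n‖₊ : ENNReal) ^ (1/(n:ℝ)) < ρ :=
    hG.eventually_lt_const hρ1
  have h2 : ∀ᶠ n : ℕ in Filter.atTop, ρ^n < (1/9 : ENNReal) := by
    have := ENNReal.tendsto_pow_atTop_nhds_zero_of_lt_one hρ2
    exact this.eventually_lt_const (by norm_num)
  have h3 : ∀ᶠ n : ℕ in Filter.atTop, 1 ≤ n := Filter.eventually_ge_atTop 1
  obtain ⟨m, hm1, hm2, hm3⟩ := (h1.and (h2.and h3)).exists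
  refine ⟨m, hm3, ?_⟩
  have hm0 : (m:ℝ) ≠ 0 := Nat.cast_ne_zero.mpr (by omega)
  have h4 : ((‖S^m‖₊ : ENNReal) ^ (1/(m:ℝ))) ^ (m:ℝ) < ρ ^ (m:ℝ) :=
    ENNReal.rpow_lt_rpow hm1 (by positivity)
  rw [← ENNReal.rpow_natCast ρ m] at hm2
  rw [← ENNReal.rpow_mul, one_div, inv_mul_cancel₀ hm0, ENNReal.rpow_one] at h4
  have h5 : (‖S^m‖₊ : ENNReal) < (1/9 : ENNReal) := h4.trans hm2
  have h6 : (‖S^m‖₊ : ENNReal) < ((1/9 : NNReal) : ENNReal) := by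
    convert h5 using 2
    simp
  rw [ENNReal.coe_lt_coe] at h6
  have := (NNReal.coe_lt_coe.mpr h6)
  simpa using this

/-- Let `T` be an invertible bounded operator (a continuous linear equivalence) on a nonzero
complex Banach space `X` whose (bounded) inverse `S = T⁻¹` has spectral radius `r(S) < 1`.
Then `T` is not weakly hypercyclic: no orbit `{T ^ n x : n ≥ 0}` is weakly dense. -/
theorem stmt_13 {X : Type*} [NormedAddCommGroup X] [NormedSpace ℂ X] [CompleteSpace X]
    [Nontrivial X] (T : X ≃L[ℂ] X)
    (hS : spectralRadius ℂ (T.symm : X →L[ℂ] X) < 1) :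
    ∀ x : X,
      ¬ Dense (Set.range fun n : ℕ => toWeakSpace ℂ X (((T : X →L[ℂ] X) ^ n) x)) := by
  intro x hdense
  have hwc : ∀ g : X →L[ℂ] ℂ, Continuous fun w : WeakSpace ℂ X => g ((toWeakSpace ℂ X).symm w) :=
    fun g => WeakBilin.eval_continuous ((topDualPairing ℂ X).flip) g
  by_cases hx : x = 0
  · subst hx
    obtain ⟨v, hv⟩ := exists_ne (0 : X)
    obtain ⟨gf, hg1, hg2⟩ := exists_dual_vector ℂ v (norm_ne_zero_iff.mpr hv)
    have hUopen : IsOpen {w : WeakSpace ℂ X | ‖v‖/2 < ‖gf ((toWeakSpace ℂ X).symm w)‖} :=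
      isOpen_lt continuous_const (hwc gf).norm
    have hvpos : (0:ℝ) < ‖v‖ := norm_pos_iff.mpr hv
    have hUne : Set.Nonempty {w : WeakSpace ℂ X | ‖v‖/2 < ‖gf ((toWeakSpace ℂ X).symm w)‖} := by
      refine ⟨toWeakSpace ℂ X v, ?_⟩
      simp only [Set.mem_setOf_eq, LinearEquiv.symm_apply_apply, hg2]
      rw [RCLike.norm_ofReal, abs_of_nonneg (norm_nonneg v)]
      linarith
    obtain ⟨p, hp1, hp2⟩ := hdense.exists_mem_open hUopen hUne
    obtain ⟨n, rfl⟩ := hp1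
    simp only [Set.mem_setOf_eq, LinearEquiv.symm_apply_apply, map_zero, norm_zero] at hp2
    linarith
  · obtain ⟨m, hm1, hm9⟩ := stmt13_exists_pow_small (T.symm : X →L[ℂ] X) hS
    have hpow : ∀ k (z : X), ((T.symm : X →L[ℂ] X)^k) ((((T : X →L[ℂ] X))^k) z) = z := by
      intro k
      induction k with
      | zero => intro z; simp
      | succ k ih =>
        intro z
        rw [pow_succ ((T.symm : X →L[ℂ] X)) k, pow_succ' ((T : X →L[ℂ] X)) k,
          ContinuousLinearMap.mul_apply, ContinuousLinearMap.mul_apply]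
        rw [show ((T.symm : X →L[ℂ] X)) (((T : X →L[ℂ] X)) ((((T : X →L[ℂ] X))^k) z))
            = (((T : X →L[ℂ] X))^k) z from T.symm_apply_apply _]
        exact ih z
    have hgrowth : ∀ z : X, 9 * ‖z‖ ≤ ‖(((T : X →L[ℂ] X))^m) z‖ := by
      intro z
      have h1 : ‖z‖ ≤ ‖((T.symm : X →L[ℂ] X))^m‖ * ‖(((T : X →L[ℂ] X))^m) z‖ := by
        conv_lhs => rw [← hpow m z]
        exact (((T.symm : X →L[ℂ] X))^m).le_opNorm _
      have h2 : (0:ℝ) ≤ ‖(((T : X →L[ℂ] X))^m) z‖ := norm_nonneg _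
      nlinarith
    have hne : ∀ n, (((T : X →L[ℂ] X))^n) x ≠ 0 := by
      intro n
      induction n with
      | zero => simpa using hx
      | succ n ih =>
        rw [pow_succ' ((T : X →L[ℂ] X)) n, ContinuousLinearMap.mul_apply]
        intro hcon
        exact ih (T.injective (by simpa using hcon))
    set y : ℕ → ℕ → X := fun j q => (((T : X →L[ℂ] X))^(m*q+j)) x with hy
    have hygrow : ∀ j q, 9 * ‖y j q‖ ≤ ‖y j (q+1)‖ := by
      intro j q
      have : y j (q+1) = (((T : X →L[ℂ] X))^m) (y j q) := by
        rw [hy]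
        simp only
        rw [show m*(q+1)+j = m + (m*q+j) by ring, pow_add, ContinuousLinearMap.mul_apply]
      rw [this]
      exact hgrowth _
    have hyne : ∀ j, y j 0 ≠ 0 := fun j => hne (m*0+j)
    choose F hF using fun j => stmt13_core (y j) (hyne j) (hygrow j)
    set U : Set (WeakSpace ℂ X) :=
      ⋂ j ∈ Finset.range m, {w | ‖F j ((toWeakSpace ℂ X).symm w)‖ < ‖y j 0‖/2} with hU
    have hUopen : IsOpen U := by
      apply isOpen_biInter_finset
      intro j _
      exact isOpen_lt (hwc (F j)).norm continuous_const
    have hUne : U.Nonempty := by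
      refine ⟨toWeakSpace ℂ X 0, ?_⟩
      rw [hU]
      simp only [Set.mem_iInter, Set.mem_setOf_eq]
      intro j _
      rw [LinearEquiv.symm_apply_apply, map_zero, norm_zero]
      have : (0:ℝ) < ‖y j 0‖ := norm_pos_iff.mpr (hyne j)
      linarith
    obtain ⟨p, hp1, hp2⟩ := hdense.exists_mem_open hUopen hUne
    obtain ⟨n, rfl⟩ := hp1
    rw [hU] at hp2
    simp only [Set.mem_iInter, Set.mem_setOf_eq] at hp2
    have hjm : n % m ∈ Finset.range m := Finset.mem_range.mpr (Nat.mod_lt n (by omega))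
    have hkey := hp2 (n % m) hjm
    rw [LinearEquiv.symm_apply_apply] at hkey
    have hyn : y (n % m) (n / m) = (((T : X →L[ℂ] X))^n) x := by
      rw [hy]
      simp only
      rw [Nat.div_add_mod]
    have hlow := hF (n % m) (n / m)
    rw [hyn] at hlow
    linarith
end

section
/- Let X be a Banach space, let Y be a norming subspace of X*, i.e. a closed linear subspace Y ⊆ X* for which there exists C > 0 such that ‖x‖ ≤ C · sup{ |f(x)| : f ∈ Y, ‖f‖ ≤ 1 } for every x ∈ X, let T be a bounded linear operator on X, and let z ∈ X and c > 1 be such that ‖T^n z‖ ≥ c^n for all sufficiently large n. Then the orbit {T^n z : n ≥ 0} is not dense in X for the σ(X, Y) topology, provided X ≠ {0}. -/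
open Finset Filter Topology

section helpers

variable {𝕜 : Type*} [RCLike 𝕜]

/-- Choose a sign `s = ±δ` such that `δ‖w‖ ≤ ‖v + s w‖`. -/
noncomputable def pick (v w : 𝕜) (δ : ℝ) : ℝ :=
  if δ * ‖w‖ ≤ ‖v + (δ : 𝕜) * w‖ then δ else -δ

lemma pick_abs (v w : 𝕜) {δ : ℝ} (hδ : 0 ≤ δ) : |pick v w δ| = δ := by
  unfold pick; split_ifs <;> simp [abs_of_nonneg hδ]

lemma pick_spec (v w : 𝕜) {δ : ℝ} (hδ : 0 ≤ δ) :
    δ * ‖w‖ ≤ ‖v + ((pick v w δ : ℝ) : 𝕜) * w‖ := by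
  unfold pick
  split_ifs with h
  · exact h
  · push_neg at h
    have hdiff : (v + (δ : 𝕜) * w) - (v + ((-δ : ℝ) : 𝕜) * w) = ((2*δ : ℝ) : 𝕜) * w := by
      push_cast; ring
    have h2 : ‖((2*δ : ℝ) : 𝕜) * w‖ ≤ ‖v + (δ : 𝕜) * w‖ + ‖v + ((-δ : ℝ) : 𝕜) * w‖ := by
      rw [← hdiff]; exact norm_sub_le _ _
    have h3 : ‖((2*δ : ℝ) : 𝕜) * w‖ = (2*δ) * ‖w‖ := by
      rw [norm_mul, RCLike.norm_ofReal, abs_of_nonneg (by linarith)]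
    nlinarith [norm_nonneg w]

variable {X : Type*} [NormedAddCommGroup X] [NormedSpace 𝕜 X]

/-- The gliding-hump partial sums. -/
noncomputable def buildS (g : ℕ → X →L[𝕜] 𝕜) (u : ℕ → X) (r : ℝ) : ℕ → X →L[𝕜] 𝕜
  | 0 => 0
  | m + 1 => buildS g u r m +
      (((pick ((buildS g u r m) (u m)) ((g m) (u m)) (r ^ m) : ℝ) : 𝕜)) • g m

/-- Key construction: if `‖u m‖ ≥ B^m` with `B > 2C+1`, there is `f ∈ Y` with
`‖f (u m)‖` bounded below uniformly. -/
lemma lemB (Y : Submodule 𝕜 (X →L[𝕜] 𝕜)) (hYclosed : IsClosed (Y : Set (X →L[𝕜] 𝕜)))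
    {C B : ℝ} (hC : 0 < C) (hB : 2*C + 1 < B)
    (hA : ∀ x : X, x ≠ 0 → ∃ g : X →L[𝕜] 𝕜, g ∈ Y ∧ ‖g‖ ≤ 1 ∧ ‖x‖ / (2*C) < ‖g x‖)
    (u : ℕ → X) (hu : ∀ m, B ^ m ≤ ‖u m‖) :
    ∃ f : X →L[𝕜] 𝕜, f ∈ Y ∧ ∀ m, 1/(2*C) - B⁻¹/(1-B⁻¹) ≤ ‖f (u m)‖ := by
  have hB1 : (1:ℝ) < B := by linarith
  have hB0 : (0:ℝ) < B := by linarith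
  have h0r : (0:ℝ) < B⁻¹ := inv_pos.2 hB0
  have hr1 : B⁻¹ < 1 := inv_lt_one_of_one_lt₀ hB1
  have hrB : B * B⁻¹ = 1 := mul_inv_cancel₀ hB0.ne'
  set r : ℝ := B⁻¹ with hrdef
  have hune : ∀ m, u m ≠ 0 := by
    intro m h
    have h1 := hu m
    rw [h, norm_zero] at h1
    nlinarith [pow_pos hB0 m]
  choose g hgY hg1 hgv using fun m => hA (u m) (hune m)
  obtain ⟨t, hS, hteq⟩ : ∃ t : ℕ → X →L[𝕜] 𝕜,
      (∀ m, buildS g u r (m+1) = buildS g u r m + t m) ∧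
      (∀ m, t m =
        (((pick ((buildS g u r m) (u m)) ((g m) (u m)) (r ^ m) : ℝ) : 𝕜)) • g m) :=
    ⟨fun m =>
        (((pick ((buildS g u r m) (u m)) ((g m) (u m)) (r ^ m) : ℝ) : 𝕜)) • g m,
      fun _ => rfl, fun _ => rfl⟩
  have ht : ∀ m, ‖t m‖ ≤ r ^ m := by
    intro m
    rw [hteq m]
    have h := norm_smul_le
      (((pick ((buildS g u r m) (u m)) ((g m) (u m)) (r ^ m) : ℝ) : 𝕜)) (g m)
    rw [RCLike.norm_ofReal, pick_abs _ _ (pow_nonneg h0r.le m)] at h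
    have h2 : r ^ m * ‖g m‖ ≤ r ^ m * 1 :=
      mul_le_mul_of_nonneg_left (hg1 m) (pow_nonneg h0r.le m)
    rw [mul_one] at h2
    exact le_trans h h2
  have hsum_norm : Summable fun m : ℕ => r ^ m := summable_geometric_of_lt_one h0r.le hr1
  have hsum : Summable t := Summable.of_norm_bounded hsum_norm ht
  obtain ⟨f, hhf⟩ := hsum
  have hparts : ∀ m, buildS g u r m = ∑ i ∈ Finset.range m, t i := by
    intro m
    induction m with
    | zero => rfl
    | succ m ih => rw [Finset.sum_range_succ, ← ih, hS]
  have hSY : ∀ m, buildS g u r m ∈ Y := by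
    intro m
    induction m with
    | zero => exact Y.zero_mem
    | succ m ih =>
      rw [hS, hteq]
      exact Y.add_mem ih (Y.smul_mem _ (hgY m))
  have hfY : f ∈ Y := by
    have h1 : Filter.Tendsto (fun m => ∑ i ∈ Finset.range m, t i) atTop (nhds f) :=
      hhf.tendsto_sum_nat
    have h2 : Filter.Tendsto (fun m => buildS g u r m) atTop (nhds f) := by
      have h3 : (fun m => buildS g u r m) = fun m => ∑ i ∈ Finset.range m, t i :=
        funext hparts
      rw [h3]; exact h1
    exact hYclosed.mem_of_tendsto h2 (Filter.Eventually.of_forall hSY)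
  refine ⟨f, hfY, ?_⟩
  intro M
  have hev : HasSum (fun m => t m (u M)) (f (u M)) := by
    have h := (ContinuousLinearMap.apply 𝕜 𝕜 (u M)).hasSum hhf
    simpa only [ContinuousLinearMap.apply_apply] using h
  have hsev : Summable fun m => t m (u M) := hev.summable
  have hsplit : f (u M) - ∑ i ∈ Finset.range (M+1), t i (u M)
      = ∑' i, t (i + (M+1)) (u M) := by
    have h := Summable.sum_add_tsum_nat_add (f := fun m => t m (u M)) (M+1) hsev
    rw [hev.tsum_eq] at h
    rw [← h]; ring
  have htail_each : ∀ i, ‖t (i + (M+1)) (u M)‖ ≤ r^(i+(M+1)) * ‖u M‖ := by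
    intro i
    calc ‖t (i + (M+1)) (u M)‖ ≤ ‖t (i + (M+1))‖ * ‖u M‖ :=
          (t (i + (M+1))).le_opNorm _
      _ ≤ r^(i+(M+1)) * ‖u M‖ :=
          mul_le_mul_of_nonneg_right (ht _) (norm_nonneg _)
  have hsummable_bound : Summable fun i => r^(i+(M+1)) * ‖u M‖ := by
    simpa [pow_add, mul_assoc] using hsum_norm.mul_right (r^(M+1) * ‖u M‖)
  have hsum_tail : Summable fun i => ‖t (i + (M+1)) (u M)‖ :=
    Summable.of_nonneg_of_le (fun _ => norm_nonneg _) htail_each hsummable_bound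
  have htail : ‖f (u M) - buildS g u r (M+1) (u M)‖ ≤ r^(M+1) * (1-r)⁻¹ * ‖u M‖ := by
    have e1 : buildS g u r (M+1) (u M) = ∑ i ∈ Finset.range (M+1), t i (u M) := by
      rw [hparts, ContinuousLinearMap.sum_apply]
    rw [e1, hsplit]
    calc ‖∑' i, t (i + (M+1)) (u M)‖ ≤ ∑' i, ‖t (i + (M+1)) (u M)‖ :=
          norm_tsum_le_tsum_norm hsum_tail
      _ ≤ ∑' i, r^(i+(M+1)) * ‖u M‖ := Summable.tsum_le_tsum htail_each hsum_tail hsummable_bound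
      _ = r^(M+1) * (1-r)⁻¹ * ‖u M‖ := by
          have e2 : (fun i : ℕ => r^(i+(M+1)) * ‖u M‖)
              = fun i : ℕ => r^i * (r^(M+1) * ‖u M‖) := by
            funext i; rw [pow_add]; ring
          rw [e2, tsum_mul_right, tsum_geometric_of_lt_one h0r.le hr1]
          ring
  have hboost : r^M * ‖(g M) (u M)‖ ≤ ‖buildS g u r (M+1) (u M)‖ := by
    have e : buildS g u r (M+1) (u M) = (buildS g u r M) (u M) +
        ((pick ((buildS g u r M) (u M)) ((g M) (u M)) (r^M) : ℝ) : 𝕜) * (g M) (u M) := by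
      rw [hS M, ContinuousLinearMap.add_apply, hteq M, ContinuousLinearMap.smul_apply,
        smul_eq_mul]
    rw [e]
    exact pick_spec _ _ (pow_nonneg h0r.le M)
  have hb2 : r^M * (‖u M‖/(2*C)) ≤ r^M * ‖(g M) (u M)‖ :=
    mul_le_mul_of_nonneg_left (hgv M).le (pow_nonneg h0r.le M)
  have hfin : ‖buildS g u r (M+1) (u M)‖ - ‖f (u M) - buildS g u r (M+1) (u M)‖
      ≤ ‖f (u M)‖ := by
    have h4 := norm_sub_le (f (u M)) (f (u M) - buildS g u r (M+1) (u M))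
    have h5 : f (u M) - (f (u M) - buildS g u r (M+1) (u M)) = buildS g u r (M+1) (u M) := by
      ring
    rw [h5] at h4
    linarith
  have hur : 1 ≤ ‖u M‖ * r^M := by
    have h1 : B^M * r^M = 1 := by rw [← mul_pow, hrB, one_pow]
    have h2 : B^M * r^M ≤ ‖u M‖ * r^M :=
      mul_le_mul_of_nonneg_right (hu M) (pow_nonneg h0r.le M)
    linarith
  have hkey : ‖u M‖ * r^M * (1/(2*C) - r/(1-r)) ≤ ‖f (u M)‖ := by
    have expand : ‖u M‖ * r^M * (1/(2*C) - r/(1-r))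
        = r^M * (‖u M‖/(2*C)) - r^(M+1) * (1-r)⁻¹ * ‖u M‖ := by
      rw [pow_succ]; field_simp
    rw [expand]
    linarith
  rcases le_or_gt (1/(2*C) - r/(1-r)) 0 with hneg | hpos
  · exact hneg.trans (norm_nonneg _)
  · have h6 : 1 * (1/(2*C) - r/(1-r)) ≤ (‖u M‖ * r^M) * (1/(2*C) - r/(1-r)) :=
      mul_le_mul_of_nonneg_right hur hpos.le
    linarith

end helpers

/-- Let `X` be a nonzero Banach space over `𝕜 = ℝ` or `ℂ` and `Y` a norming closed subspace of
`X*` (there is `C > 0` with `‖x‖ ≤ C * sup {|f x| : f ∈ Y, ‖f‖ ≤ 1}` for all `x`). Let `T` be a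
bounded operator on `X` and `z ∈ X`, `c > 1` with `‖T ^ n z‖ ≥ c ^ n` for all sufficiently
large `n`. Then the orbit `{T ^ n z : n ≥ 0}` is not dense for the `σ(X, Y)` topology (the
coarsest topology making every `f ∈ Y` continuous). -/
theorem stmt_15 {𝕜 : Type*} [RCLike 𝕜] {X : Type*} [NormedAddCommGroup X]
    [NormedSpace 𝕜 X] [CompleteSpace X] [Nontrivial X]
    (Y : Submodule 𝕜 (X →L[𝕜] 𝕜)) (hYclosed : IsClosed (Y : Set (X →L[𝕜] 𝕜)))
    (hYnorming : ∃ C : ℝ, 0 < C ∧ ∀ x : X,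
      ‖x‖ ≤ C * sSup ((fun f : X →L[𝕜] 𝕜 => ‖f x‖) '' {f | f ∈ Y ∧ ‖f‖ ≤ 1}))
    (T : X →L[𝕜] X) (z : X) {c : ℝ} (hc : 1 < c)
    (hgrowth : ∃ N : ℕ, ∀ n : ℕ, N ≤ n → c ^ n ≤ ‖(T ^ n) z‖) :
    ¬ @Dense X
      (TopologicalSpace.induced (fun (v : X) (f : Y) => (f : X →L[𝕜] 𝕜) v) Pi.topologicalSpace)
      (Set.range fun n : ℕ => (T ^ n) z) := by
  intro hD
  obtain ⟨C, hC, hnorm⟩ := hYnorming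
  obtain ⟨N, hN⟩ := hgrowth
  have hc0 : (0:ℝ) < c := by linarith
  -- extraction of norming functionals
  have hA : ∀ x : X, x ≠ 0 → ∃ g : X →L[𝕜] 𝕜, g ∈ Y ∧ ‖g‖ ≤ 1 ∧ ‖x‖ / (2*C) < ‖g x‖ := by
    intro x hx
    have hx0 : 0 < ‖x‖ := norm_pos_iff.2 hx
    have hne : ((fun f : X →L[𝕜] 𝕜 => ‖f x‖) '' {f | f ∈ Y ∧ ‖f‖ ≤ 1}).Nonempty :=
      ⟨‖(0 : X →L[𝕜] 𝕜) x‖, ⟨0, ⟨Y.zero_mem, by simp⟩, rfl⟩⟩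
    have h1 : ‖x‖ / C ≤ sSup ((fun f : X →L[𝕜] 𝕜 => ‖f x‖) '' {f | f ∈ Y ∧ ‖f‖ ≤ 1}) := by
      rw [div_le_iff₀ hC, mul_comm]
      exact hnorm x
    have h2 : ‖x‖/(2*C) < ‖x‖/C := div_lt_div_of_pos_left hx0 hC (by linarith)
    obtain ⟨y, hy, hlty⟩ := exists_lt_of_lt_csSup hne (lt_of_lt_of_le h2 h1)
    obtain ⟨g, ⟨hgY, hg1⟩, rfl⟩ := hy
    exact ⟨g, hgY, hg1, hlty⟩
  -- choose d with c^d > 2C+1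
  obtain ⟨d, hd⟩ : ∃ d : ℕ, 2*C+1 < c^d := pow_unbounded_of_one_lt _ hc
  have hd0 : 0 < d := by
    rcases Nat.eq_zero_or_pos d with h | h
    · rw [h, pow_zero] at hd; linarith
    · exact h
  set B : ℝ := c ^ d with hBdef
  have hB1 : (1:ℝ) < B := by linarith
  have hθ : 0 < 1/(2*C) - B⁻¹/(1-B⁻¹) := by
    have hB0 : (0:ℝ) < B := by linarith
    have h0r : (0:ℝ) < B⁻¹ := inv_pos.2 hB0
    have hr1 : B⁻¹ < 1 := inv_lt_one_of_one_lt₀ hB1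
    have h1r : (0:ℝ) < 1 - B⁻¹ := by linarith
    have hrB : B⁻¹ * B = 1 := inv_mul_cancel₀ hB0.ne'
    have h7 : B⁻¹ * (2*C+1) < B⁻¹ * B := mul_lt_mul_of_pos_left hd h0r
    have h8 : B⁻¹/(1-B⁻¹) < 1/(2*C) := by
      rw [div_lt_div_iff₀ h1r (by linarith : (0:ℝ) < 2*C)]
      nlinarith
    linarith
  -- the tail functionals, one per congruence class mod d
  have hF : ∀ j : Fin d, ∃ f : X →L[𝕜] 𝕜, f ∈ Y ∧
      ∀ m, 1/(2*C) - B⁻¹/(1-B⁻¹) ≤ ‖f ((T ^ (N + j.1 + m*d)) z)‖ := by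
    intro j
    apply lemB Y hYclosed hC hd hA
    intro m
    have e1 : B ^ m = c ^ (d*m) := by rw [hBdef, ← pow_mul]
    have e2 : c ^ (d*m) ≤ c ^ (N + j.1 + m*d) := by
      apply pow_le_pow_right₀ (le_of_lt hc)
      rw [Nat.mul_comm]
      exact Nat.le_add_left _ _
    have e3 : N ≤ N + j.1 + m*d :=
      (Nat.le_add_right N j.1).trans (Nat.le_add_right _ _)
    calc B ^ m = c ^ (d*m) := e1
      _ ≤ c ^ (N + j.1 + m*d) := e2
      _ ≤ ‖(T ^ (N + j.1 + m*d)) z‖ := hN _ e3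
  choose F hFY hFθ using hF
  -- orbit points are nonzero
  have hxne : ∀ n : ℕ, (T ^ n) z ≠ 0 := by
    intro n h
    have h1 : c ^ (N+n) ≤ ‖(T ^ (N+n)) z‖ := hN _ (Nat.le_add_right _ _)
    have h2 : (T ^ (N+n)) z = 0 := by
      rw [pow_add, ContinuousLinearMap.mul_apply, h, map_zero]
    rw [h2, norm_zero] at h1
    nlinarith [pow_pos hc0 (N+n)]
  choose G hGY hG1 hGv using fun n : Fin N => hA ((T ^ (n:ℕ)) z) (hxne n)
  -- the open neighbourhood of 0 in σ(X,Y)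
  set Φ : X → (Y → 𝕜) := fun v f => (f : X →L[𝕜] 𝕜) v with hΦdef
  set V : Set (Y → 𝕜) :=
    (⋂ j : Fin d, {p | ‖p ⟨F j, hFY j⟩‖ < 1/(2*C) - B⁻¹/(1-B⁻¹)}) ∩
    (⋂ n : Fin N, {p | ‖p ⟨G n, hGY n⟩‖ < ‖(T ^ (n:ℕ)) z‖ / (2*C)}) with hVdef
  have hVopen : IsOpen V := by
    apply IsOpen.inter
    · apply isOpen_iInter_of_finite
      intro j
      show IsOpen ((fun p : Y → 𝕜 => p ⟨F j, hFY j⟩) ⁻¹'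
        {k : 𝕜 | ‖k‖ < 1/(2*C) - B⁻¹/(1-B⁻¹)})
      exact IsOpen.preimage (continuous_apply _) (isOpen_lt continuous_norm continuous_const)
    · apply isOpen_iInter_of_finite
      intro n
      show IsOpen ((fun p : Y → 𝕜 => p ⟨G n, hGY n⟩) ⁻¹'
        {k : 𝕜 | ‖k‖ < ‖(T ^ (n:ℕ)) z‖ / (2*C)})
      exact IsOpen.preimage (continuous_apply _) (isOpen_lt continuous_norm continuous_const)
  have hcont : @Continuous X (Y → 𝕜)
      (TopologicalSpace.induced (fun (v : X) (f : Y) => (f : X →L[𝕜] 𝕜) v)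
        Pi.topologicalSpace) Pi.topologicalSpace Φ :=
    continuous_induced_dom
  have hUopen : @IsOpen X
      (TopologicalSpace.induced (fun (v : X) (f : Y) => (f : X →L[𝕜] 𝕜) v)
        Pi.topologicalSpace) (Φ ⁻¹' V) :=
    @Continuous.isOpen_preimage X (Y → 𝕜)
      (TopologicalSpace.induced (fun (v : X) (f : Y) => (f : X →L[𝕜] 𝕜) v)
        Pi.topologicalSpace) Pi.topologicalSpace Φ hcont V hVopen
  have h0U : (0:X) ∈ Φ ⁻¹' V := by
    constructor
    · apply Set.mem_iInter.2
      intro j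
      show ‖(F j) (0:X)‖ < _
      rw [map_zero, norm_zero]
      exact hθ
    · apply Set.mem_iInter.2
      intro n
      show ‖(G n) (0:X)‖ < _
      rw [map_zero, norm_zero]
      exact div_pos (norm_pos_iff.2 (hxne n)) (by linarith)
  obtain ⟨v, hvU, n, hvn⟩ :=
    @Dense.inter_open_nonempty X
      (TopologicalSpace.induced (fun (v : X) (f : Y) => (f : X →L[𝕜] 𝕜) v)
        Pi.topologicalSpace) (Set.range fun n : ℕ => (T ^ n) z) hD (Φ ⁻¹' V) hUopen ⟨0, h0U⟩
  subst hvn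
  obtain ⟨hv1, hv2⟩ := hvU
  rcases lt_or_ge n N with hn | hn
  · have h1 := Set.mem_iInter.1 hv2 ⟨n, hn⟩
    have h2 := hGv ⟨n, hn⟩
    change ‖(G ⟨n, hn⟩) ((T ^ n) z)‖ < _ at h1
    simp only [Fin.val_mk] at h1 h2
    linarith
  · have hj : (n - N) % d < d := Nat.mod_lt _ hd0
    have hidx : N + (n - N) % d + ((n - N) / d) * d = n := by
      have h3 : (n - N) % d + (n - N) / d * d = n - N := Nat.mod_add_div' (n - N) d
      have h4 : N + (n - N) = n := Nat.add_sub_cancel' hn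
      omega
    have h1 := Set.mem_iInter.1 hv1 ⟨(n - N) % d, hj⟩
    change ‖(F ⟨(n - N) % d, hj⟩) ((T ^ n) z)‖ < _ at h1
    have h2 := hFθ ⟨(n - N) % d, hj⟩ ((n - N) / d)
    simp only [Fin.val_mk] at h2
    rw [hidx] at h2
    linarith
end
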